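/- arXiv:1012.4047 — 4 statements merged into one kernel-verified Lean document; each statement's English description precedes it below -/
import Mathlib

section
/- Let b be a nonnegative even integer and let k and m be positive integers with m = 1 and k even. Then E_{2k+b} - E_b ≡ 2k(-(b-7)^2 + 38 + 2k(3b - 1 + 2k)) (mod 2^{8}). -/
open Finset Polynomial

def eulerE : ℕ → ℤ
  | 0 => 1
  | 1 => 0
  | n + 2 =>
      if Even n then
        -∑ r ∈ (Finset.range (n / 2 + 1)).attach,
          ((n + 2).choose (2 * r.1) : ℤ) * eulerE (2 * r.1)
      else 0
  decreasing_by
    have := r.2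
    simp only [Finset.mem_range] at this
    omega

/-- Integer expression agreeing with `eulerE (2r)` mod 256. -/
def Pz (r : ℕ) : ℤ :=
  1 + 4 * ((2*r).choose 1) - 10 * ((2*r).choose 2) + 10 * ((2*r).choose 3)
    + 8 * ((2*r).choose 4)

lemma even_sum {R : Type*} [CommRing R] (f : ℕ → R) (n : ℕ) :
    ∑ k ∈ range (2*n+1), (1 + (-1:R)^k) * f k = 2 * ∑ r ∈ range (n+1), f (2*r) := by
  induction n with
  | zero => simp; ring
  | succ n ih =>
      rw [show 2*(n+1)+1 = (2*n+1)+1+1 by ring, sum_range_succ, sum_range_succ, ih,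
        sum_range_succ]
      have h1 : (-1:R)^(2*n+1) = -1 := by
        rw [pow_succ, pow_mul]; simp
      have h2 : (-1:R)^(2*n+1+1) = 1 := by
        rw [pow_succ, h1]; ring
      rw [h1, h2, show 2*n+1+1 = 2*(n+1) by ring, sum_range_succ _ (n+1),
        sum_range_succ _ n]
      ring

lemma poly_key (n : ℕ) :
    ((X + 2 : ℤ[X]))^(2*n) + X^(2*n)
      = 2 * ∑ r ∈ range (n+1), (((2*n).choose (2*r) : ℤ[X])) * (X+1)^(2*r) := by
  have e1 : (X + 2 : ℤ[X])^(2*n) = ((X+1) + 1)^(2*n) := by ring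
  have e2 : (X : ℤ[X])^(2*n) = ((X+1) + (-1))^(2*n) := by ring
  rw [e1, e2, add_pow, add_pow, ← sum_add_distrib]
  rw [← even_sum (fun k => (((2*n).choose k : ℤ[X])) * (X+1)^k) n]
  refine sum_congr rfl fun k hk => ?_
  simp only [mem_range] at hk
  have hneg : ((-1 : ℤ[X]))^(2*n-k) = (-1)^k := by
    rcases Nat.even_or_odd k with he | ho
    · have hE : Even (2*n - k) := by
        rcases he with ⟨a, rfl⟩; exact ⟨n - a, by omega⟩
      rw [hE.neg_one_pow, he.neg_one_pow]
    · have hO : Odd (2*n - k) := by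
        rcases ho with ⟨a, rfl⟩; exact ⟨n - a - 1, by omega⟩
      rw [hO.neg_one_pow, ho.neg_one_pow]
  rw [hneg]
  ring

lemma choose_sum_eq (n m : ℕ) (hm : m < 2*n) :
    (2:ℤ) * ∑ r ∈ range (n+1), ((2*n).choose (2*r) : ℤ) * ((2*r).choose m : ℤ)
      = ((2*n).choose m : ℤ) * 2^(2*n - m) := by
  have h := congrArg (fun p : ℤ[X] => p.coeff m) (poly_key n)
  rw [Polynomial.coeff_add] at h
  have hX2 : ((X + 2 : ℤ[X]))^(2*n) = (X + C 2)^(2*n) := by norm_num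
  rw [hX2, Polynomial.coeff_X_add_C_pow, Polynomial.coeff_X_pow, if_neg (by omega)] at h
  have hr : ((2 : ℤ[X]) * ∑ r ∈ range (n+1),
      (((2*n).choose (2*r) : ℤ[X])) * (X+1)^(2*r)).coeff m
      = 2 * ∑ r ∈ range (n+1), ((2*n).choose (2*r) : ℤ) * ((2*r).choose m : ℤ) := by
    rw [show (2 : ℤ[X]) = C 2 by norm_num, Polynomial.coeff_C_mul,
      Polynomial.finset_sum_coeff]
    congr 1
    refine sum_congr rfl fun r _ => ?_
    rw [show (((2*n).choose (2*r) : ℤ[X])) = C (((2*n).choose (2*r) : ℤ)) by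
        rw [Polynomial.C_eq_natCast],
      Polynomial.coeff_C_mul, Polynomial.coeff_X_add_one_pow]
  rw [hr] at h
  linear_combination -h

lemma S_dvd (n : ℕ) (hn : 1 ≤ n) :
    (256:ℤ) ∣ ∑ r ∈ range (n+1), ((2*n).choose (2*r) : ℤ) * Pz r := by
  rcases Nat.lt_or_ge n 6 with h6 | h6
  · interval_cases n <;> decide
  · have h0 := choose_sum_eq n 0 (by omega)
    have h1 := choose_sum_eq n 1 (by omega)
    have h2 := choose_sum_eq n 2 (by omega)
    have h3 := choose_sum_eq n 3 (by omega)
    have h4 := choose_sum_eq n 4 (by omega)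
    have key : (512:ℤ) ∣ 2 * ∑ r ∈ range (n+1), ((2*n).choose (2*r) : ℤ) * Pz r := by
      have e : 2 * ∑ r ∈ range (n+1), ((2*n).choose (2*r) : ℤ) * Pz r
          = ((2*n).choose 0 : ℤ) * 2^(2*n-0) + 4 * (((2*n).choose 1 : ℤ) * 2^(2*n-1))
            - 10 * (((2*n).choose 2 : ℤ) * 2^(2*n-2)) + 10 * (((2*n).choose 3 : ℤ) * 2^(2*n-3))
            + 8 * (((2*n).choose 4 : ℤ) * 2^(2*n-4)) := by
        calc 2 * ∑ r ∈ range (n+1), ((2*n).choose (2*r) : ℤ) * Pz r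
            = ∑ r ∈ range (n+1),
              (2 * (((2*n).choose (2*r) : ℤ) * ((2*r).choose 0 : ℤ))
               + 4 * (2 * (((2*n).choose (2*r) : ℤ) * ((2*r).choose 1 : ℤ)))
               - 10 * (2 * (((2*n).choose (2*r) : ℤ) * ((2*r).choose 2 : ℤ)))
               + 10 * (2 * (((2*n).choose (2*r) : ℤ) * ((2*r).choose 3 : ℤ)))
               + 8 * (2 * (((2*n).choose (2*r) : ℤ) * ((2*r).choose 4 : ℤ)))) := by
              rw [Finset.mul_sum]
              refine sum_congr rfl fun r _ => ?_
              simp only [Pz, Nat.choose_zero_right]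
              push_cast
              ring
          _ = 2 * ∑ r ∈ range (n+1), ((2*n).choose (2*r) : ℤ) * ((2*r).choose 0 : ℤ)
               + 4 * (2 * ∑ r ∈ range (n+1), ((2*n).choose (2*r) : ℤ) * ((2*r).choose 1 : ℤ))
               - 10 * (2 * ∑ r ∈ range (n+1), ((2*n).choose (2*r) : ℤ) * ((2*r).choose 2 : ℤ))
               + 10 * (2 * ∑ r ∈ range (n+1), ((2*n).choose (2*r) : ℤ) * ((2*r).choose 3 : ℤ))
               + 8 * (2 * ∑ r ∈ range (n+1), ((2*n).choose (2*r) : ℤ) * ((2*r).choose 4 : ℤ)) := by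
              simp only [Finset.sum_add_distrib, Finset.sum_sub_distrib, ← Finset.mul_sum]
          _ = _ := by rw [h0, h1, h2, h3, h4]
      rw [e]
      have p9 : ∀ e : ℕ, 9 ≤ e → (512:ℤ) ∣ 2^e := by
        intro e he
        calc (512:ℤ) = 2^9 := by norm_num
        _ ∣ 2^e := pow_dvd_pow 2 he
      have d0 : (512:ℤ) ∣ ((2*n).choose 0 : ℤ) * 2^(2*n-0) :=
        Dvd.dvd.mul_left (p9 _ (by omega)) _
      have d1 : (512:ℤ) ∣ 4 * (((2*n).choose 1 : ℤ) * 2^(2*n-1)) :=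
        Dvd.dvd.mul_left (Dvd.dvd.mul_left (p9 _ (by omega)) _) _
      have d2 : (512:ℤ) ∣ 10 * (((2*n).choose 2 : ℤ) * 2^(2*n-2)) :=
        Dvd.dvd.mul_left (Dvd.dvd.mul_left (p9 _ (by omega)) _) _
      have d3 : (512:ℤ) ∣ 10 * (((2*n).choose 3 : ℤ) * 2^(2*n-3)) :=
        Dvd.dvd.mul_left (Dvd.dvd.mul_left (p9 _ (by omega)) _) _
      have d4 : (512:ℤ) ∣ 8 * (((2*n).choose 4 : ℤ) * 2^(2*n-4)) := by
        have he : 8 * (((2*n).choose 4 : ℤ) * 2^(2*n-4))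
            = ((2*n).choose 4 : ℤ) * 2^(2*n-1) := by
          rw [show 2*n-1 = 3 + (2*n-4) by omega, pow_add]
          ring
        rw [he]
        exact Dvd.dvd.mul_left (p9 _ (by omega)) _
      exact dvd_add (dvd_add (dvd_sub (dvd_add d0 d1) d2) d3) d4
    obtain ⟨w, hw⟩ := key
    exact ⟨w, by omega⟩

lemma euler_mod (n : ℕ) :
    ((eulerE (2*n) : ZMod 256)) = ((Pz n : ℤ) : ZMod 256) := by
  induction n using Nat.strong_induction_on with
  | _ n ih =>
    rcases n with _ | n
    · norm_num [eulerE, Pz]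
    · rw [show 2*(n+1) = (2*n)+2 by ring, eulerE,
        if_pos (even_two_mul n), Nat.mul_div_cancel_left n (by norm_num : 0 < 2)]
      push_cast
      have hcong : ∑ r ∈ (range (n+1)).attach,
            ((2*n+2).choose (2*r.1) : ZMod 256) * ((eulerE (2*r.1) : ZMod 256))
          = ∑ r ∈ (range (n+1)).attach,
            ((2*n+2).choose (2*r.1) : ZMod 256) * ((Pz r.1 : ℤ) : ZMod 256) := by
        refine sum_congr rfl fun r _ => ?_
        rw [ih r.1 (by have := r.2; simp only [mem_range] at this; omega)]
      rw [hcong, Finset.sum_attach (range (n+1))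
        (fun r => ((2*n+2).choose (2*r) : ZMod 256) * ((Pz r : ℤ) : ZMod 256))]
      have hd := S_dvd (n+1) (by omega)
      have h0 : ((∑ r ∈ range (n+2), ((2*(n+1)).choose (2*r) : ℤ) * Pz r : ℤ) : ZMod 256)
          = 0 := by
        rw [ZMod.intCast_zmod_eq_zero_iff_dvd]
        exact_mod_cast hd
      rw [show 2*(n+1) = 2*n+2 by ring] at h0
      rw [Finset.sum_range_succ] at h0
      rw [show 2*(n+1) = 2*n+2 by ring, Nat.choose_self] at h0
      push_cast at h0
      linear_combination -h0

lemma pascal2 (a j : ℕ) :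
    (a+2).choose (j+2) = a.choose j + 2 * a.choose (j+1) + a.choose (j+2) := by
  show ((a+1)+1).choose ((j+1)+1) = a.choose j + 2 * a.choose (j+1) + a.choose ((j+1)+1)
  rw [Nat.choose_succ_succ (a+1) (j+1), Nat.choose_succ_succ a j, Nat.choose_succ_succ a (j+1)]
  ring

lemma ch2 (n : ℕ) : (((2*n).choose 2 : ℕ) : ℤ) = 2*(n:ℤ)^2 - n := by
  induction n with
  | zero => simp
  | succ m ih =>
    have h := pascal2 (2*m) 0
    norm_num [Nat.choose_one_right] at h
    rw [show 2*(m+1) = 2*m+2 by ring, h]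
    push_cast
    linear_combination ih

lemma ch3 (n : ℕ) : (3:ℤ) * (((2*n).choose 3 : ℕ) : ℤ)
    = 4*(n:ℤ)^3 - 6*(n:ℤ)^2 + 2*n := by
  induction n with
  | zero => simp
  | succ m ih =>
    have h := pascal2 (2*m) 1
    norm_num [Nat.choose_one_right] at h
    rw [show 2*(m+1) = 2*m+2 by ring, h]
    push_cast
    linear_combination ih + 6 * ch2 m
  
lemma ch4 (n : ℕ) : (6:ℤ) * (((2*n).choose 4 : ℕ) : ℤ)
    = (n:ℤ)*((n:ℤ)-1)*(2*(n:ℤ)-1)*(2*(n:ℤ)-3) := by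
  induction n with
  | zero => simp
  | succ m ih =>
    have h := pascal2 (2*m) 2
    norm_num at h
    rw [show 2*(m+1) = 2*m+2 by ring, h]
    push_cast
    linear_combination ih + 4 * ch3 m + 6 * ch2 m

lemma pz3 (n : ℕ) : (3:ℤ) * Pz n
    = 3 + 24*(n:ℤ) - 30*(2*(n:ℤ)^2 - n) + 10*(4*(n:ℤ)^3 - 6*(n:ℤ)^2 + 2*n)
      + 4*((n:ℤ)*((n:ℤ)-1)*(2*(n:ℤ)-1)*(2*(n:ℤ)-3)) := by
  simp only [Pz, Nat.choose_one_right]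
  push_cast
  linear_combination (-30 : ℤ) * ch2 n + 10 * ch3 n + 4 * ch4 n

theorem stern_ext_m_eq_one_k_even (b k m : ℕ) (hb : Even b) (hk : 0 < k) (hm : 0 < m)
    (hm1 : m = 1) (hke : Even k) :
    eulerE (2 ^ m * k + b) - eulerE b ≡
      2 * k * (-((b : ℤ) - 7) ^ 2 + 38 + 2 * k * (3 * b - 1 + 2 * k)) [ZMOD 2 ^ 8] := by
  subst hm1
  obtain ⟨c, rfl⟩ := hb
  obtain ⟨kk, rfl⟩ := hke
  suffices h : (((eulerE (2^1*(kk+kk)+(c+c)) - eulerE (c+c)) : ℤ) : ZMod 256)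
      = ((2 * ((kk:ℤ)+kk) * (-(((c:ℤ)+c) - 7) ^ 2 + 38
          + 2 * ((kk:ℤ)+kk) * (3 * ((c:ℤ)+c) - 1 + 2 * ((kk:ℤ)+kk))) : ℤ) : ZMod 256) by
    have h2 := (ZMod.intCast_eq_intCast_iff _ _ 256).mp h
    show _ ≡ _ [ZMOD ((256:ℕ):ℤ)]
    push_cast at h2 ⊢
    convert h2 using 2
  rw [show (2:ℕ)^1*(kk+kk)+(c+c) = 2*(2*kk+c) by ring, show c+c = 2*c by ring]
  push_cast
  rw [euler_mod (2*kk+c), euler_mod c]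
  have hu : IsUnit (3 : ZMod 256) := IsUnit.of_mul_eq_one (a := 3) 171 (by decide)
  apply hu.mul_left_cancel
  have E1 := congrArg (fun z : ℤ => ((z : ZMod 256))) (pz3 (2*kk+c))
  have E2 := congrArg (fun z : ℤ => ((z : ZMod 256))) (pz3 c)
  push_cast at E1 E2
  have hz : (256 : ZMod 256) = 0 := by decide
  rcases Nat.even_or_odd c with ⟨t, rfl⟩ | ⟨t, rfl⟩
  · push_cast at E1 E2 ⊢
    linear_combination E1 - E2 +
      (((kk:ZMod 256)) - (kk:ZMod 256)^2 - (kk:ZMod 256)^3 + (kk:ZMod 256)^4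
        - 5*(t:ZMod 256)*(kk:ZMod 256) - 3*(t:ZMod 256)*(kk:ZMod 256)^2
        + 4*(t:ZMod 256)*(kk:ZMod 256)^3 + 6*(t:ZMod 256)^2*(kk:ZMod 256)^2
        + 4*(t:ZMod 256)^3*(kk:ZMod 256)) * hz
  · push_cast at E1 E2 ⊢
    linear_combination E1 - E2 +
      (-(kk:ZMod 256) - (kk:ZMod 256)^2 + (kk:ZMod 256)^3 + (kk:ZMod 256)^4
        - 2*(t:ZMod 256)*(kk:ZMod 256) + 3*(t:ZMod 256)*(kk:ZMod 256)^2
        + 4*(t:ZMod 256)*(kk:ZMod 256)^3 + 6*(t:ZMod 256)^2*(kk:ZMod 256)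
        + 6*(t:ZMod 256)^2*(kk:ZMod 256)^2 + 4*(t:ZMod 256)^3*(kk:ZMod 256)) * hz
end

section
/- Let b be a nonnegative even integer and let k be an odd positive integer. Then E_{2k+b} - E_b ≡ 2k(-(b+1)^2 + 6 + 2k(3b - 1 + 2k)) - 16(b + (-1)^{b/2}) (mod 2^{8}). -/
open Finset


lemma eulerE_zero : eulerE 0 = 1 := by rw [eulerE]
lemma eulerE_one : eulerE 1 = 0 := by rw [eulerE]

lemma eulerE_odd (n : ℕ) : eulerE (2 * n + 1) = 0 := by
  cases n with
  | zero => exact eulerE_one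
  | succ k =>
    show eulerE ((2 * k + 1) + 2) = 0
    rw [eulerE]
    simp [Nat.even_add_one, parity_simps]

lemma eulerE_rec (n : ℕ) :
    eulerE (2 * (n + 1)) = -∑ r ∈ range (n + 1), ((2 * (n + 1)).choose (2 * r) : ℤ) * eulerE (2 * r) := by
  show eulerE ((2 * n) + 2) = _
  rw [eulerE]
  rw [if_pos (even_two_mul n)]
  rw [Nat.mul_div_cancel_left n (by norm_num)]
  rw [Finset.sum_attach (range (n+1)) (fun r => ((2 * n + 2).choose (2 * r) : ℤ) * eulerE (2 * r))]
  norm_num [Nat.mul_succ]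

lemma eulerE_sum (n : ℕ) :
    ∑ r ∈ range (n + 2), ((2 * (n + 1)).choose (2 * r) : ℤ) * eulerE (2 * r) = 0 := by
  rw [Finset.sum_range_succ, Nat.choose_self, eulerE_rec]
  push_cast
  ring

-- generic triangle reindex
lemma triangle_sum (G : ℕ → ℕ → ℤ) (n : ℕ) :
    ∑ j ∈ range (n + 1), ∑ i ∈ range (j + 1), G i (j - i)
      = ∑ t ∈ range (n + 1), ∑ i ∈ range (n - t + 1), G t i := by
  induction n with
  | zero => simp
  | succ n ih =>
    rw [Finset.sum_range_succ, ih,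
      Finset.sum_range_succ (fun t => ∑ i ∈ range (n + 1 - t + 1), G t i)]
    have h1 : ∀ t ∈ range (n + 1), (∑ i ∈ range (n + 1 - t + 1), G t i)
        = (∑ i ∈ range (n - t + 1), G t i) + G t (n + 1 - t) := by
      intro t ht
      simp only [Finset.mem_range] at ht
      have : n + 1 - t = (n - t) + 1 := by omega
      rw [this, Finset.sum_range_succ]
    rw [Finset.sum_congr rfl h1, Finset.sum_add_distrib]
    have h2 : ∑ i ∈ range (n + 1 - (n + 1) + 1), G (n + 1) i = G (n + 1) (n + 1 - (n + 1)) := by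
      simp
    rw [h2, Finset.sum_range_succ (fun i => G i (n + 1 - i))]
    ring

lemma sum_even_if (f : ℕ → ℤ) (N : ℕ) :
    ∑ i ∈ range (2 * N + 1), (if Even i then f i else 0) = ∑ r ∈ range (N + 1), f (2 * r) := by
  induction N with
  | zero => simp
  | succ N ih =>
    have h : 2 * (N + 1) + 1 = (2 * N + 1) + 1 + 1 := by ring
    rw [h, Finset.sum_range_succ, Finset.sum_range_succ, ih, Finset.sum_range_succ]
    have h1 : ¬ Even (2 * N + 1) := by simp [parity_simps]
    have h2 : Even (2 * N + 1 + 1) := ⟨N + 1, by ring⟩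
    rw [if_neg h1, if_pos h2]
    rw [Finset.sum_range_succ (fun r => f (2 * r))]
    have h3 : 2 * (N + 1) = 2 * N + 2 := by ring
    rw [h3, Finset.sum_range_succ (fun r => f (2 * r))]
    ring

lemma lemB (M : ℕ) :
    ∑ i ∈ range (M + 1), (if Even i then (M.choose i : ℤ) * eulerE (M - i) else 0)
      = if M = 0 then 1 else 0 := by
  rcases Nat.even_or_odd M with hM | hM
  case inl =>
    rcases Nat.eq_zero_or_pos M with rfl | hpos
    · simp [eulerE_zero]
    obtain ⟨N, rfl⟩ : ∃ N, M = 2 * N + 2 := by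
      obtain ⟨c, hc⟩ := hM; exact ⟨c - 1, by omega⟩
    rw [if_neg (by omega)]
    have h : 2 * N + 2 + 1 = 2 * (N + 1) + 1 := by ring
    rw [h, sum_even_if (fun i => ((2 * N + 2).choose i : ℤ) * eulerE (2 * N + 2 - i)) (N + 1)]
    have h2 : ∀ r ∈ range (N + 2), ((2 * N + 2).choose (2 * r) : ℤ) * eulerE (2 * N + 2 - 2 * r)
        = (fun s => ((2 * (N + 1)).choose (2 * s) : ℤ) * eulerE (2 * s)) (N + 1 - r) := by
      intro r hr
      simp only [Finset.mem_range] at hr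
      have hr' : r ≤ N + 1 := by omega
      have e1 : 2 * (N + 1 - r) = 2 * N + 2 - 2 * r := by omega
      have e2 : (2 * N + 2).choose (2 * r) = (2 * (N + 1)).choose (2 * (N + 1 - r)) := by
        rw [e1]
        have : 2 * (N + 1) = 2 * N + 2 := by ring
        rw [this, Nat.choose_symm (by omega)]
      simp only [e2, e1]
    rw [Finset.sum_congr rfl h2]
    have h3 := Finset.sum_range_reflect
      (fun s => ((2 * (N + 1)).choose (2 * s) : ℤ) * eulerE (2 * s)) (N + 2)
    have h4 : ∀ j ∈ range (N + 2), (fun s => ((2 * (N + 1)).choose (2 * s) : ℤ) * eulerE (2 * s)) (N + 2 - 1 - j)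
        = (fun s => ((2 * (N + 1)).choose (2 * s) : ℤ) * eulerE (2 * s)) (N + 1 - j) := by
      intro j hj; norm_num
    rw [Finset.sum_congr rfl h4] at h3
    rw [h3, eulerE_sum]
  case inr =>
    obtain ⟨N, rfl⟩ : ∃ N, M = 2 * N + 1 := by
      obtain ⟨c, hc⟩ := hM; exact ⟨c, by omega⟩
    rw [if_neg (by omega)]
    apply Finset.sum_eq_zero
    intro i hi
    simp only [Finset.mem_range] at hi
    by_cases he : Even i
    · rw [if_pos he]
      obtain ⟨q, hq⟩ : ∃ q, 2 * N + 1 - i = 2 * q + 1 := by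
        obtain ⟨c, hc⟩ := he
        exact ⟨N - c, by omega⟩
      rw [hq, eulerE_odd]
      ring
    · rw [if_neg he]

lemma two_pow_eq (j : ℕ) :
    (2:ℤ)^j + (if j = 0 then 1 else 0)
      = 2 * ∑ i ∈ range (j + 1), (if Even i then (j.choose i : ℤ) else 0) := by
  have h1 : ∀ i ∈ range (j + 1), 2 * (if Even i then (j.choose i : ℤ) else 0)
      = (j.choose i : ℤ) + (-1)^i * (j.choose i : ℤ) := by
    intro i _
    by_cases he : Even i
    · rw [if_pos he, he.neg_one_pow]; ring
    · rw [if_neg he, (Nat.not_even_iff_odd.1 he).neg_one_pow]; ring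
  rw [Finset.mul_sum, Finset.sum_congr rfl h1, Finset.sum_add_distrib,
    Int.alternating_sum_range_choose]
  have h2 : ∑ i ∈ range (j + 1), (j.choose i : ℤ) = 2 ^ j := by
    exact_mod_cast congrArg (Nat.cast : ℕ → ℤ) (Nat.sum_range_choose j)
  rw [h2]

lemma lemA (n : ℕ) :
    eulerE n + ∑ j ∈ range (n + 1), (n.choose j : ℤ) * 2^j * eulerE (n - j) = 2 := by
  have step2 : eulerE n + ∑ j ∈ range (n + 1), (n.choose j : ℤ) * 2^j * eulerE (n - j)
      = ∑ j ∈ range (n + 1), (n.choose j : ℤ) * ((2:ℤ)^j + (if j = 0 then 1 else 0)) * eulerE (n - j) := by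
    have : ∀ j ∈ range (n + 1), (n.choose j : ℤ) * ((2:ℤ)^j + (if j = 0 then 1 else 0)) * eulerE (n - j)
        = (n.choose j : ℤ) * 2^j * eulerE (n - j)
          + (if j = 0 then (n.choose j : ℤ) * eulerE (n - j) else 0) := by
      intro j _
      by_cases hj : j = 0
      · subst hj; simp [eulerE]; ring
      · rw [if_neg hj, if_neg hj]; ring
    rw [Finset.sum_congr rfl this, Finset.sum_add_distrib, Finset.sum_ite_eq' (range (n+1)) 0
      (fun j => (n.choose j : ℤ) * eulerE (n - j))]
    simp [Finset.mem_range]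
    ring
  rw [step2]
  have step3 : ∀ j ∈ range (n + 1), (n.choose j : ℤ) * ((2:ℤ)^j + (if j = 0 then 1 else 0)) * eulerE (n - j)
      = 2 * ∑ i ∈ range (j + 1), (if Even i then (n.choose j : ℤ) * (j.choose i : ℤ) * eulerE (n - j) else 0) := by
    intro j _
    rw [two_pow_eq j]
    simp only [Finset.mul_sum, Finset.sum_mul]
    apply Finset.sum_congr rfl
    intro i _
    by_cases he : Even i
    · simp only [if_pos he]; ring
    · simp only [if_neg he]; ring
  rw [Finset.sum_congr rfl step3, ← Finset.mul_sum]
  set G : ℕ → ℕ → ℤ := fun t i =>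
    if Even i then ((n.choose t : ℤ)) * ((n - t).choose i : ℤ) * eulerE (n - t - i) else 0 with hG
  have step4 : ∀ j ∈ range (n + 1),
      (∑ i ∈ range (j + 1), (if Even i then (n.choose j : ℤ) * (j.choose i : ℤ) * eulerE (n - j) else 0))
        = ∑ i ∈ range (j + 1), G i (j - i) := by
    intro j hj
    simp only [Finset.mem_range] at hj
    have hjn : j ≤ n := by omega
    have pt : ∀ i ∈ range (j + 1),
        (if Even i then (n.choose j : ℤ) * (j.choose i : ℤ) * eulerE (n - j) else 0)
          = G (j - i) i := by
      intro i hi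
      simp only [Finset.mem_range] at hi
      have hij : i ≤ j := by omega
      rw [hG]
      by_cases he : Even i
      · simp only [if_pos he]
        have hnat : n.choose j * j.choose i = n.choose (j - i) * (n - (j - i)).choose i := by
          have h1 : j.choose i = j.choose (j - i) := (Nat.choose_symm hij).symm
          have h2 := Nat.choose_mul (n := n) (Nat.sub_le j i)
          rw [h1, h2]
          congr 2
          omega
        have harg : n - (j - i) - i = n - j := by omega
        rw [harg]
        have hcast : ((n.choose j : ℤ)) * (j.choose i : ℤ)
            = (n.choose (j - i) : ℤ) * ((n - (j - i)).choose i : ℤ) := by exact_mod_cast hnat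
        linear_combination eulerE (n - j) * hcast
      · simp only [if_neg he]
    rw [Finset.sum_congr rfl pt]
    have hrefl := Finset.sum_range_reflect (fun t => G t (j - t)) (j + 1)
    have pt2 : ∀ i ∈ range (j + 1), (fun t => G t (j - t)) (j + 1 - 1 - i) = G (j - i) i := by
      intro i hi
      simp only [Finset.mem_range] at hi
      simp only
      congr 1 <;> omega
    rw [Finset.sum_congr rfl pt2] at hrefl
    rw [hrefl]
  rw [Finset.sum_congr rfl step4, triangle_sum G n]
  have step6 : ∀ t ∈ range (n + 1),
      (∑ i ∈ range (n - t + 1), G t i) = if t = n then (1:ℤ) else 0 := by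
    intro t ht
    simp only [Finset.mem_range] at ht
    have pt : ∀ i ∈ range (n - t + 1), G t i
        = (n.choose t : ℤ) * (if Even i then ((n - t).choose i : ℤ) * eulerE (n - t - i) else 0) := by
      intro i _
      rw [hG]
      by_cases he : Even i
      · simp only [if_pos he]; ring
      · simp only [if_neg he]; ring
    rw [Finset.sum_congr rfl pt, ← Finset.mul_sum, lemB (n - t)]
    by_cases htn : t = n
    · subst htn
      simp
    · rw [if_neg (by omega), if_neg htn]
      ring
  rw [Finset.sum_congr rfl step6]
  rw [Finset.sum_ite_eq' (range (n + 1)) n (fun _ => (1:ℤ))]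
  rw [if_pos (by simp [Finset.mem_range])]
  ring

def Φ (m : ℕ) : ℤ := 1 + ∑ i ∈ range m, (-8 * (i:ℤ)^2 - 16 * i + 14 - 16 * (-1)^i)

lemma phi3 (m : ℕ) : 3 * Φ m = -8 * (m:ℤ)^3 - 12 * (m:ℤ)^2 + 62 * m - 21 + 24 * (-1:ℤ)^m := by
  induction m with
  | zero => simp [Φ]
  | succ m ih =>
    have hstep : Φ (m + 1) = Φ m + (-8 * (m:ℤ)^2 - 16 * m + 14 - 16 * (-1)^m) := by
      rw [Φ, Φ, Finset.sum_range_succ]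
      ring
    rw [hstep, pow_succ]
    push_cast
    linear_combination ih

lemma chooseQ (n : ℕ) : ∀ t : ℕ, (n.choose t : ℚ) = (∏ i ∈ range t, ((n:ℚ) - i)) / (t.factorial : ℚ) := by
  intro t
  induction t with
  | zero => simp
  | succ t ih =>
    rcases Nat.lt_or_ge n (t + 1) with h | h
    · rw [Nat.choose_eq_zero_of_lt h]
      have : (∏ i ∈ range (t + 1), ((n:ℚ) - i)) = 0 := by
        apply Finset.prod_eq_zero (Finset.mem_range.2 h)
        simp
      rw [this]
      simp
    · have hrec : (n.choose (t+1) : ℚ) * ((t:ℚ) + 1) = (n.choose t : ℚ) * ((n:ℚ) - t) := by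
        have hh := Nat.choose_succ_right_eq n t
        have := congrArg (Nat.cast (R := ℚ)) hh
        push_cast [Nat.cast_sub (show t ≤ n by omega)] at this
        exact this
      have hfac : ((t+1).factorial : ℚ) ≠ 0 := by
        exact_mod_cast Nat.cast_ne_zero.2 (Nat.factorial_pos (t+1)).ne'
      have hfac' : ((t).factorial : ℚ) ≠ 0 := by
        exact_mod_cast Nat.cast_ne_zero.2 (Nat.factorial_pos t).ne'
      have ih' : (n.choose t : ℚ) * (t.factorial : ℚ) = ∏ i ∈ range t, ((n:ℚ) - i) := by
        rw [ih]
        field_simp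
      rw [eq_div_iff hfac, Finset.prod_range_succ, Nat.factorial_succ]
      push_cast
      linear_combination (t.factorial : ℚ) * hrec + ((n:ℚ) - t) * ih'

lemma phiQ (m : ℕ) : ((Φ m : ℤ) : ℚ)
    = (-8 * (m:ℚ)^3 - 12 * (m:ℚ)^2 + 62 * m - 21 + 24 * (-1:ℚ)^m) / 3 := by
  have h := congrArg (fun z : ℤ => (z : ℚ)) (phi3 m)
  push_cast at h
  rw [eq_div_iff (by norm_num : (3:ℚ) ≠ 0)]
  linarith [h]
def He (w : ℕ) : ℤ :=
  (-5670:ℤ)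
    + (-7860510:ℤ) * (w.choose 1 : ℤ)
    + (-1261720530:ℤ) * (w.choose 2 : ℤ)
    + (-36308807010:ℤ) * (w.choose 3 : ℤ)
    + (-387035598600:ℤ) * (w.choose 4 : ℤ)
    + (-2060791770240:ℤ) * (w.choose 5 : ℤ)
    + (-6291679726080:ℤ) * (w.choose 6 : ℤ)
    + (-11749986662400:ℤ) * (w.choose 7 : ℤ)
    + (-13683676446720:ℤ) * (w.choose 8 : ℤ)
    + (-9712224829440:ℤ) * (w.choose 9 : ℤ)
    + (-3849663283200:ℤ) * (w.choose 10 : ℤ)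
    + (-653996851200:ℤ) * (w.choose 11 : ℤ)

def Ho (w : ℕ) : ℤ :=
  (-326970:ℤ)
    + (-150392970:ℤ) * (w.choose 1 : ℤ)
    + (-8227047150:ℤ) * (w.choose 2 : ℤ)
    + (-136369704870:ℤ) * (w.choose 3 : ℤ)
    + (-1031961780360:ℤ) * (w.choose 4 : ℤ)
    + (-4311721411200:ℤ) * (w.choose 5 : ℤ)
    + (-10936136332800:ℤ) * (w.choose 6 : ℤ)
    + (-17595393177600:ℤ) * (w.choose 7 : ℤ)
    + (-18099951206400:ℤ) * (w.choose 8 : ℤ)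
    + (-11555306864640:ℤ) * (w.choose 9 : ℤ)
    + (-4176661708800:ℤ) * (w.choose 10 : ℤ)
    + (-653996851200:ℤ) * (w.choose 11 : ℤ)


lemma key_id_even (w : ℕ) :
    945 * (2 * Φ (2*w+4) - 2 + 4 * ((2*(2*w+4)).choose 2 : ℤ) * Φ (2*w+3)
      + 16 * ((2*(2*w+4)).choose 4 : ℤ) * Φ (2*w+2) + 64 * ((2*(2*w+4)).choose 6 : ℤ) * Φ (2*w+1)
      + 256 * ((2*(2*w+4)).choose 8 : ℤ) * Φ (2*w)) = 512 * He w := by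
  have key : ((945 * (2 * Φ (2*w+4) - 2 + 4 * ((2*(2*w+4)).choose 2 : ℤ) * Φ (2*w+3)
      + 16 * ((2*(2*w+4)).choose 4 : ℤ) * Φ (2*w+2) + 64 * ((2*(2*w+4)).choose 6 : ℤ) * Φ (2*w+1)
      + 256 * ((2*(2*w+4)).choose 8 : ℤ) * Φ (2*w)) : ℤ) : ℚ) = ((512 * He w : ℤ) : ℚ) := by
    push_cast [He]
    rw [phiQ (2*w+4), phiQ (2*w+3), phiQ (2*w+2), phiQ (2*w+1), phiQ (2*w)]
    have hs0 : (-1:ℚ)^(2*w+4) = 1 := (even_two_mul w |>.add (by decide)).neg_one_pow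
    have hs1 : (-1:ℚ)^(2*w+3) = -1 := ((even_two_mul w).add_odd (by decide)).neg_one_pow
    have hs2 : (-1:ℚ)^(2*w+2) = 1 := (even_two_mul w |>.add (by decide)).neg_one_pow
    have hs3 : (-1:ℚ)^(2*w+1) = -1 := ((even_two_mul w).add_odd (by decide)).neg_one_pow
    have hs4 : (-1:ℚ)^(2*w) = 1 := (even_two_mul w).neg_one_pow
    rw [hs0, hs1, hs2, hs3, hs4]
    rw [chooseQ (2*(2*w+4)) 2, chooseQ (2*(2*w+4)) 4, chooseQ (2*(2*w+4)) 6, chooseQ (2*(2*w+4)) 8,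
      chooseQ w 1, chooseQ w 2, chooseQ w 3, chooseQ w 4, chooseQ w 5, chooseQ w 6,
      chooseQ w 7, chooseQ w 8, chooseQ w 9, chooseQ w 10, chooseQ w 11]
    simp only [Finset.prod_range_succ, Finset.prod_range_zero]
    norm_num [Nat.factorial]
    push_cast
    ring
  exact_mod_cast key

lemma key_id_odd (w : ℕ) :
    945 * (2 * Φ (2*w+5) - 2 + 4 * ((2*(2*w+5)).choose 2 : ℤ) * Φ (2*w+4)
      + 16 * ((2*(2*w+5)).choose 4 : ℤ) * Φ (2*w+3) + 64 * ((2*(2*w+5)).choose 6 : ℤ) * Φ (2*w+2)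
      + 256 * ((2*(2*w+5)).choose 8 : ℤ) * Φ (2*w+1)) = 512 * Ho w := by
  have key : ((945 * (2 * Φ (2*w+5) - 2 + 4 * ((2*(2*w+5)).choose 2 : ℤ) * Φ (2*w+4)
      + 16 * ((2*(2*w+5)).choose 4 : ℤ) * Φ (2*w+3) + 64 * ((2*(2*w+5)).choose 6 : ℤ) * Φ (2*w+2)
      + 256 * ((2*(2*w+5)).choose 8 : ℤ) * Φ (2*w+1)) : ℤ) : ℚ) = ((512 * Ho w : ℤ) : ℚ) := by
    push_cast [Ho]
    rw [phiQ (2*w+5), phiQ (2*w+4), phiQ (2*w+3), phiQ (2*w+2), phiQ (2*w+1)]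
    have hs0 : (-1:ℚ)^(2*w+5) = -1 := ((even_two_mul w).add_odd (by decide)).neg_one_pow
    have hs1 : (-1:ℚ)^(2*w+4) = 1 := (even_two_mul w |>.add (by decide)).neg_one_pow
    have hs2 : (-1:ℚ)^(2*w+3) = -1 := ((even_two_mul w).add_odd (by decide)).neg_one_pow
    have hs3 : (-1:ℚ)^(2*w+2) = 1 := (even_two_mul w |>.add (by decide)).neg_one_pow
    have hs4 : (-1:ℚ)^(2*w+1) = -1 := ((even_two_mul w).add_odd (by decide)).neg_one_pow
    rw [hs0, hs1, hs2, hs3, hs4]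
    rw [chooseQ (2*(2*w+5)) 2, chooseQ (2*(2*w+5)) 4, chooseQ (2*(2*w+5)) 6, chooseQ (2*(2*w+5)) 8,
      chooseQ w 1, chooseQ w 2, chooseQ w 3, chooseQ w 4, chooseQ w 5, chooseQ w 6,
      chooseQ w 7, chooseQ w 8, chooseQ w 9, chooseQ w 10, chooseQ w 11]
    simp only [Finset.prod_range_succ, Finset.prod_range_zero]
    norm_num [Nat.factorial]
    ring
  exact_mod_cast key

lemma eulerE_two : eulerE 2 = -1 := by
  have h := lemA 2
  rw [Finset.sum_range_succ, Finset.sum_range_succ, Finset.sum_range_succ,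
    Finset.sum_range_zero] at h
  norm_num [eulerE_zero, eulerE_one] at h
  omega

lemma eulerE_three : eulerE 3 = 0 := by
  have := eulerE_odd 1; norm_num at this; exact this

lemma eulerE_five : eulerE 5 = 0 := by
  have := eulerE_odd 2; norm_num at this; exact this

lemma eulerE_four : eulerE 4 = 5 := by
  have h := lemA 4
  rw [Finset.sum_range_succ, Finset.sum_range_succ, Finset.sum_range_succ,
    Finset.sum_range_succ, Finset.sum_range_succ, Finset.sum_range_zero] at h
  norm_num [eulerE_zero, eulerE_one, eulerE_two, eulerE_three,
    show Nat.choose 4 1 = 4 from rfl, show Nat.choose 4 2 = 6 from rfl,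
    show Nat.choose 4 3 = 4 from rfl] at h
  omega

lemma eulerE_six : eulerE 6 = -61 := by
  have h := lemA 6
  rw [Finset.sum_range_succ, Finset.sum_range_succ, Finset.sum_range_succ,
    Finset.sum_range_succ, Finset.sum_range_succ, Finset.sum_range_succ,
    Finset.sum_range_succ, Finset.sum_range_zero] at h
  norm_num [eulerE_zero, eulerE_one, eulerE_two, eulerE_three, eulerE_four, eulerE_five,
    show Nat.choose 6 1 = 6 from rfl, show Nat.choose 6 2 = 15 from rfl,
    show Nat.choose 6 3 = 20 from rfl, show Nat.choose 6 4 = 15 from rfl,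
    show Nat.choose 6 5 = 6 from rfl] at h
  omega

lemma coprime945 : IsCoprime (256:ℤ) 945 := by
  rw [Int.isCoprime_iff_gcd_eq_one]
  decide

lemma master (m : ℕ) : (256:ℤ) ∣ eulerE (2*m) - Φ m := by
  induction m using Nat.strong_induction_on with
  | _ m ih =>
  rcases Nat.lt_or_ge m 4 with hm | hm
  · interval_cases m
    · norm_num [Φ, eulerE_zero]
    · norm_num [Φ, Finset.sum_range_succ, eulerE_two]
    · norm_num [Φ, Finset.sum_range_succ, eulerE_four]
    · norm_num [Φ, Finset.sum_range_succ, eulerE_six]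
  · obtain ⟨s, rfl⟩ : ∃ s, m = s + 4 := ⟨m - 4, by omega⟩
    have hA := lemA (2*(s+4))
    rw [show 2*(s+4)+1 = 9+2*s from by ring, Finset.sum_range_add] at hA
    have htail : (2:ℤ)^9 ∣ ∑ i ∈ range (2*s),
        ((2*(s+4)).choose (9+i) : ℤ) * 2^(9+i) * eulerE (2*(s+4) - (9+i)) := by
      apply Finset.dvd_sum
      intro i _
      exact ⟨((2*(s+4)).choose (9+i) : ℤ) * 2^i * eulerE (2*(s+4) - (9+i)), by
        rw [pow_add]; ring⟩
    obtain ⟨T, hT⟩ := htail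
    rw [hT] at hA
    simp only [Finset.sum_range_succ, Finset.sum_range_zero] at hA
    rw [show 2*(s+4) - 1 = 2*(s+3)+1 from by omega,
        show 2*(s+4) - 2 = 2*(s+3) from by omega,
        show 2*(s+4) - 3 = 2*(s+2)+1 from by omega,
        show 2*(s+4) - 4 = 2*(s+2) from by omega,
        show 2*(s+4) - 5 = 2*(s+1)+1 from by omega,
        show 2*(s+4) - 6 = 2*(s+1) from by omega,
        show 2*(s+4) - 7 = 2*s+1 from by omega,
        show 2*(s+4) - 8 = 2*s from by omega] at hA
    simp only [eulerE_odd, Nat.sub_zero, Nat.choose_zero_right, Nat.cast_one, pow_zero,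
      mul_zero, zero_mul, mul_one, one_mul, add_zero, zero_add] at hA
    rcases Nat.even_or_odd s with hpar | hpar
    · obtain ⟨w, rfl⟩ : ∃ w, s = 2*w := by obtain ⟨c, hc⟩ := hpar; exact ⟨c, by omega⟩
      obtain ⟨d1, hd1⟩ := ih (2*w+3) (by omega)
      obtain ⟨d2, hd2⟩ := ih (2*w+2) (by omega)
      obtain ⟨d3, hd3⟩ := ih (2*w+1) (by omega)
      obtain ⟨d4, hd4⟩ := ih (2*w) (by omega)
      have hgoal : (945:ℤ) * 2 * (eulerE (2*(2*w+4)) - Φ (2*w+4))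
          = 512 * (-945*(2*((2*(2*w+4)).choose 2:ℤ)*d1 + 8*((2*(2*w+4)).choose 4:ℤ)*d2
              + 32*((2*(2*w+4)).choose 6:ℤ)*d3 + 128*((2*(2*w+4)).choose 8:ℤ)*d4 + T)
            - He w) := by
        linear_combination (945:ℤ) * hA - key_id_even w
          - 3780 * ((2*(2*w+4)).choose 2:ℤ) * hd1
          - 15120 * ((2*(2*w+4)).choose 4:ℤ) * hd2
          - 60480 * ((2*(2*w+4)).choose 6:ℤ) * hd3
          - 241920 * ((2*(2*w+4)).choose 8:ℤ) * hd4
      have hdvd : (256:ℤ) ∣ (eulerE (2*(2*w+4)) - Φ (2*w+4)) * 945 := by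
        refine ⟨-945*(2*((2*(2*w+4)).choose 2:ℤ)*d1 + 8*((2*(2*w+4)).choose 4:ℤ)*d2
              + 32*((2*(2*w+4)).choose 6:ℤ)*d3 + 128*((2*(2*w+4)).choose 8:ℤ)*d4 + T)
            - He w, by linarith [hgoal]⟩
      exact coprime945.dvd_of_dvd_mul_right hdvd
    · obtain ⟨w, rfl⟩ : ∃ w, s = 2*w+1 := by obtain ⟨c, hc⟩ := hpar; exact ⟨c, by omega⟩
      simp only [show 2*w+1+4 = 2*w+5 from by omega, show 2*w+1+3 = 2*w+4 from by omega,
        show 2*w+1+2 = 2*w+3 from by omega, show 2*w+1+1 = 2*w+2 from by omega] at hA ⊢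
      obtain ⟨d1, hd1⟩ := ih (2*w+4) (by omega)
      obtain ⟨d2, hd2⟩ := ih (2*w+3) (by omega)
      obtain ⟨d3, hd3⟩ := ih (2*w+2) (by omega)
      obtain ⟨d4, hd4⟩ := ih (2*w+1) (by omega)
      have hgoal : (945:ℤ) * 2 * (eulerE (2*(2*w+5)) - Φ (2*w+5))
          = 512 * (-945*(2*((2*(2*w+5)).choose 2:ℤ)*d1 + 8*((2*(2*w+5)).choose 4:ℤ)*d2
              + 32*((2*(2*w+5)).choose 6:ℤ)*d3 + 128*((2*(2*w+5)).choose 8:ℤ)*d4 + T)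
            - Ho w) := by
        linear_combination (945:ℤ) * hA - key_id_odd w
          - 3780 * ((2*(2*w+5)).choose 2:ℤ) * hd1
          - 15120 * ((2*(2*w+5)).choose 4:ℤ) * hd2
          - 60480 * ((2*(2*w+5)).choose 6:ℤ) * hd3
          - 241920 * ((2*(2*w+5)).choose 8:ℤ) * hd4
      have hdvd : (256:ℤ) ∣ (eulerE (2*(2*w+5)) - Φ (2*w+5)) * 945 := by
        refine ⟨-945*(2*((2*(2*w+5)).choose 2:ℤ)*d1 + 8*((2*(2*w+5)).choose 4:ℤ)*d2
              + 32*((2*(2*w+5)).choose 6:ℤ)*d3 + 128*((2*(2*w+5)).choose 8:ℤ)*d4 + T)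
            - Ho w, by linarith [hgoal]⟩
      exact coprime945.dvd_of_dvd_mul_right hdvd

lemma asm_even (u t : ℕ) :
    Φ (2*t+1+2*u) - Φ (2*u)
      - (2*(2*(t:ℤ)+1)*(-((2*(2*(u:ℤ)))+1)^2 + 6 + 2*(2*(t:ℤ)+1)*(3*(2*(2*(u:ℤ))) - 1 + 2*(2*(t:ℤ)+1)))
         - 16*(2*(2*(u:ℤ)) + 1))
    = 256 * (-(t:ℤ) - 3*(t.choose 2:ℤ) - 2*(t.choose 3:ℤ) - 2*(u:ℤ)*(t:ℤ) - 2*(u:ℤ)*(t.choose 2:ℤ)) := by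
  rw [← @Int.cast_inj ℚ]
  push_cast
  rw [phiQ (2*t+1+2*u), phiQ (2*u)]
  have hs1 : (-1:ℚ)^(2*t+1+2*u) = -1 := Odd.neg_one_pow ⟨t+u, by ring⟩
  have hs2 : (-1:ℚ)^(2*u) = 1 := (even_two_mul u).neg_one_pow
  rw [hs1, hs2, chooseQ t 2, chooseQ t 3]
  simp only [Finset.prod_range_succ, Finset.prod_range_zero]
  norm_num [Nat.factorial]
  ring

lemma asm_odd (u t : ℕ) :
    Φ (2*t+1+(2*u+1)) - Φ (2*u+1)
      - (2*(2*(t:ℤ)+1)*(-((2*(2*(u:ℤ)+1))+1)^2 + 6 + 2*(2*(t:ℤ)+1)*(3*(2*(2*(u:ℤ)+1)) - 1 + 2*(2*(t:ℤ)+1)))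
         - 16*(2*(2*(u:ℤ)+1) + (-1)))
    = 256 * (-2*(t:ℤ) - 4*(t.choose 2:ℤ) - 2*(t.choose 3:ℤ) - 2*(u:ℤ)*(t:ℤ) - 2*(u:ℤ)*(t.choose 2:ℤ)) := by
  rw [← @Int.cast_inj ℚ]
  push_cast
  rw [phiQ (2*t+1+(2*u+1)), phiQ (2*u+1)]
  have hs1 : (-1:ℚ)^(2*t+1+(2*u+1)) = 1 := Even.neg_one_pow ⟨t+u+1, by ring⟩
  have hs2 : (-1:ℚ)^(2*u+1) = -1 := Odd.neg_one_pow ⟨u, by ring⟩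
  rw [hs1, hs2, chooseQ t 2, chooseQ t 3]
  simp only [Finset.prod_range_succ, Finset.prod_range_zero]
  norm_num [Nat.factorial]
  ring

theorem stern_ext_m_eq_one_k_odd (b k : ℕ) (hb : Even b) (hk : 0 < k) (hko : Odd k) :
    eulerE (2 * k + b) - eulerE b ≡
      2 * k * (-((b : ℤ) + 1) ^ 2 + 6 + 2 * k * (3 * b - 1 + 2 * k))
        - 16 * ((b : ℤ) + (-1) ^ (b / 2)) [ZMOD 2 ^ 8] := by
  obtain ⟨h, rfl⟩ : ∃ h, b = 2*h := by
    obtain ⟨c, hc⟩ := hb; exact ⟨c, by omega⟩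
  obtain ⟨t, rfl⟩ := hko
  refine Int.modEq_iff_dvd.2 ?_
  rw [show 2*(2*t+1)+2*h = 2*(2*t+1+h) from by ring]
  simp only [show 2*h/2 = h from by omega]
  obtain ⟨D1, hD1⟩ := master (2*t+1+h)
  obtain ⟨D2, hD2⟩ := master h
  rcases Nat.even_or_odd h with hp | hp
  · obtain ⟨u, rfl⟩ : ∃ u, h = 2*u := by obtain ⟨c, hc⟩ := hp; exact ⟨c, by omega⟩
    have hsgn : (-1:ℤ)^(2*u) = 1 := (even_two_mul u).neg_one_pow
    rw [hsgn]
    have hasm := asm_even u t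
    refine ⟨-(-(t:ℤ) - 3*(t.choose 2:ℤ) - 2*(t.choose 3:ℤ) - 2*(u:ℤ)*(t:ℤ) - 2*(u:ℤ)*(t.choose 2:ℤ))
      - D1 + D2, ?_⟩
    push_cast
    linear_combination -hasm - hD1 + hD2
  · obtain ⟨u, rfl⟩ : ∃ u, h = 2*u+1 := by obtain ⟨c, hc⟩ := hp; exact ⟨c, by omega⟩
    have hsgn : (-1:ℤ)^(2*u+1) = -1 := Odd.neg_one_pow ⟨u, by ring⟩
    rw [hsgn]
    have hasm := asm_odd u t
    refine ⟨-(-2*(t:ℤ) - 4*(t.choose 2:ℤ) - 2*(t.choose 3:ℤ) - 2*(u:ℤ)*(t:ℤ) - 2*(u:ℤ)*(t.choose 2:ℤ))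
      - D1 + D2, ?_⟩
    push_cast
    linear_combination -hasm - hD1 + hD2
end

section
/- Let b be a nonnegative even integer and let k be a positive integer. Then E_{4k+b} - E_b ≡ 4k(7(b+1)^2 - 18 + 12k(b + 1 + 4((-1)^{b/2} - k))) (mod 2^{9}). -/
namespace SternProof

def fwd (f : ℕ → ℤ) : ℕ → ℤ := fun M => f (M+1) - f M

theorem fwd_iter_add (i : ℕ) : ∀ (f g : ℕ → ℤ),
    fwd^[i] (fun M => f M + g M) = fun M => fwd^[i] f M + fwd^[i] g M := by
  induction i with
  | zero => intro f g; rfl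
  | succ i ih =>
    intro f g
    rw [Function.iterate_succ_apply, Function.iterate_succ_apply, Function.iterate_succ_apply]
    have h : fwd (fun M => f M + g M) = fun M => fwd f M + fwd g M := by
      funext M; simp only [fwd]; ring
    rw [h, ih]

theorem fwd_iter_smul (i : ℕ) : ∀ (a : ℤ) (f : ℕ → ℤ),
    fwd^[i] (fun M => a * f M) = fun M => a * fwd^[i] f M := by
  induction i with
  | zero => intro a f; rfl
  | succ i ih =>
    intro a f
    rw [Function.iterate_succ_apply, Function.iterate_succ_apply]
    have h : fwd (fun M => a * f M) = fun M => a * fwd f M := by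
      funext M; simp only [fwd]; ring
    rw [h, ih]

theorem fwd_iter_zero (i : ℕ) : fwd^[i] (fun _ => (0:ℤ)) = fun _ => 0 := by
  induction i with
  | zero => rfl
  | succ i ih =>
    rw [Function.iterate_succ_apply]
    have h : fwd (fun _ => (0:ℤ)) = fun _ => (0:ℤ) := by funext M; simp [fwd]
    rw [h, ih]

theorem fwd_iter_sum (i : ℕ) : ∀ (d : ℕ) (g : ℕ → ℕ → ℤ),
    fwd^[i] (fun M => ∑ j ∈ Finset.range d, g j M) =
      fun M => ∑ j ∈ Finset.range d, fwd^[i] (g j) M := by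
  induction i with
  | zero => intro d g; rfl
  | succ i ih =>
    intro d g
    rw [Function.iterate_succ_apply]
    have h : fwd (fun M => ∑ j ∈ Finset.range d, g j M)
        = fun M => ∑ j ∈ Finset.range d, fwd (g j) M := by
      funext M; simp only [fwd, ← Finset.sum_sub_distrib]
    rw [h, ih]
    funext M
    refine Finset.sum_congr rfl fun j _ => ?_
    rw [← Function.iterate_succ_apply]

theorem sign_iter (a : ℤ) : ∀ i, fwd^[i] (fun M => a * (-1)^M) = fun M => a * (-2)^i * (-1)^M := by
  intro i
  induction i with
  | zero => funext M; norm_num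
  | succ i ih =>
    rw [Function.iterate_succ_apply', ih]
    funext M
    simp only [fwd]
    ring

theorem atom_succ (c t : ℕ) : fwd (fun M => ((2*M+c).choose (t+2) : ℤ))
    = fun M => 2 * ((2*M+c).choose (t+1) : ℤ) + ((2*M+c).choose t : ℤ) := by
  funext M
  have h : 2*(M+1)+c = (2*M+c)+1+1 := by ring
  simp only [fwd, h, Nat.choose_succ_succ ((2*M+c)+1), Nat.choose_succ_succ (2*M+c)]
  push_cast
  ring

theorem atom_kill : ∀ (t c : ℕ), fwd^[t+1] (fun M => ((2*M+c).choose t : ℤ)) = fun _ => 0 := by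
  intro t
  induction t using Nat.strong_induction_on with
  | _ t ih =>
    match t with
    | 0 =>
      intro c
      funext M
      simp [fwd, Nat.choose_zero_right]
    | 1 =>
      intro c
      have h1 : fwd (fun M => ((2*M+c).choose 1 : ℤ)) = fun _ => 2 := by
        funext M
        have h : 2*(M+1)+c = (2*M+c)+2 := by ring
        simp only [fwd, h, Nat.choose_one_right]
        push_cast; ring
      rw [show (1+1 : ℕ) = 1+1 from rfl, Function.iterate_succ_apply, h1]
      funext M; simp [fwd]
    | (t+2) =>
      intro c
      rw [Function.iterate_succ_apply, atom_succ]
      have hadd : fwd^[t+2] (fun M => 2 * ((2*M+c).choose (t+1) : ℤ) + ((2*M+c).choose t : ℤ))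
          = fun M => fwd^[t+2] (fun M => 2 * ((2*M+c).choose (t+1) : ℤ)) M
            + fwd^[t+2] (fun M => ((2*M+c).choose t : ℤ)) M := fwd_iter_add _ _ _
      rw [hadd, fwd_iter_smul]
      have k1 : fwd^[t+2] (fun M => ((2*M+c).choose (t+1) : ℤ)) = fun _ => 0 :=
        ih (t+1) (by omega) c
      have k2 : fwd^[t+2] (fun M => ((2*M+c).choose t : ℤ)) = fun _ => 0 := by
        rw [show t+2 = 1+(t+1) by omega, Function.iterate_add_apply, ih t (by omega) c]
        funext M; simp [fwd]
      rw [k1, k2]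
      funext M; simp

theorem newton : ∀ (M : ℕ) (f : ℕ → ℤ),
    f M = ∑ i ∈ Finset.range (M+1), (M.choose i : ℤ) * fwd^[i] f 0 := by
  intro M
  induction M with
  | zero => intro f; simp
  | succ M ih =>
    intro f
    have h1 : f (M+1) = f M + fwd f M := by simp [fwd]
    rw [h1, ih f, ih (fwd f)]
    have h2 : ∑ i ∈ Finset.range (M+1), (M.choose i : ℤ) * fwd^[i] (fwd f) 0
        = ∑ i ∈ Finset.range (M+1), (M.choose i : ℤ) * fwd^[i+1] f 0 := by
      refine Finset.sum_congr rfl fun i _ => ?_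
      rw [← Function.iterate_succ_apply]
    rw [h2]
    rw [Finset.sum_range_succ' (fun i => ((M+1).choose i : ℤ) * fwd^[i] f 0) (M+1)]
    simp only [Nat.choose_succ_succ, Nat.choose_zero_right]
    push_cast
    rw [Finset.sum_range_succ (fun i => ((M.choose i : ℤ) + (M.choose (i+1) : ℤ)) * fwd^[i+1] f 0) M]
    simp only [Nat.choose_succ_self, Nat.cast_zero]
    have h3 : ∑ i ∈ Finset.range M, ((M.choose i : ℤ) + (M.choose (i+1):ℤ)) * fwd^[i+1] f 0
        = ∑ i ∈ Finset.range M, (M.choose i : ℤ) * fwd^[i+1] f 0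
          + ∑ i ∈ Finset.range M, (M.choose (i+1) : ℤ) * fwd^[i+1] f 0 := by
      rw [← Finset.sum_add_distrib]; refine Finset.sum_congr rfl fun i _ => by ring
    rw [h3]
    have h4 : ∑ i ∈ Finset.range (M+1), (M.choose i : ℤ) * fwd^[i] f 0
        = ∑ i ∈ Finset.range M, (M.choose (i+1) : ℤ) * fwd^[i+1] f 0 + (M.choose 0 : ℤ) * f 0 := by
      rw [Finset.sum_range_succ' (fun i => (M.choose i : ℤ) * fwd^[i] f 0) M]
      rfl
    have h5 : ∑ i ∈ Finset.range (M+1), (M.choose i : ℤ) * fwd^[i+1] f 0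
        = ∑ i ∈ Finset.range M, (M.choose i : ℤ) * fwd^[i+1] f 0
          + (M.choose M : ℤ) * fwd^[M+1] f 0 := Finset.sum_range_succ _ _
    rw [h4, h5]
    simp [Nat.choose_self, Nat.choose_zero_right]
    ring

theorem dvd512 (f : ℕ → ℤ) (h : ∀ i, (512:ℤ) ∣ fwd^[i] f 0) : ∀ M, (512:ℤ) ∣ f M := by
  intro M
  rw [newton M f]
  exact Finset.dvd_sum fun i _ => Dvd.dvd.mul_left (h i) _





def vL : ℕ → ℤ := fun j =>
  if j = 0 then 1 else if j = 2 then -2 else if j = 4 then 16 else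
  if j = 6 then 240 else if j = 8 then 256 else 0

def wL : ℕ → ℤ := fun j =>
  if j = 0 then 187 else if j = 1 then -132 else if j = 2 then -54 else if j = 4 then -16 else
  if j = 6 then -240 else if j = 8 then -256 else 0

def FF (n : ℕ) : ℤ := ∑ j ∈ Finset.range 9, vL j * ((2*n).choose j : ℤ)

def qfun : ℕ → ℤ := fun M =>
  ∑ j ∈ Finset.range 9, (vL j * ((2*M+4).choose j : ℤ) + wL j * ((2*M).choose j : ℤ))

def hfun : ℕ → ℤ := fun M => qfun M + (-192) * (-1)^M

theorem hv0 : hfun 0 = 0 := by decide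
theorem hv1 : hfun 1 = 512 := by decide
theorem hv2 : hfun 2 = 7168 := by decide
theorem hv3 : hfun 3 = 63488 := by decide
theorem hv4 : hfun 4 = 345600 := by decide
theorem hv5 : hfun 5 = 1436672 := by decide
theorem hv6 : hfun 6 = 4883968 := by decide
theorem hv7 : hfun 7 = 14194176 := by decide
theorem hv8 : hfun 8 = 36373504 := by decide

example : (512:ℤ) ∣ fwd^[4] hfun 0 := by
  norm_num [Function.iterate_succ', Function.comp_def, fwd, hv0, hv1, hv2, hv3, hv4]
example : (512:ℤ) ∣ fwd^[8] hfun 0 := by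
  norm_num [Function.iterate_succ', Function.comp_def, fwd, hv0, hv1, hv2, hv3, hv4, hv5, hv6, hv7, hv8]



theorem h9 : fwd^[9] hfun = fun M => 98304 * (-1)^M := by
  have h1 : fwd^[9] hfun = fun M => fwd^[9] qfun M + fwd^[9] (fun M => (-192:ℤ) * (-1)^M) M := by
    exact fwd_iter_add 9 qfun (fun M => (-192:ℤ) * (-1)^M)
  have h2 : fwd^[9] qfun = fun _ => 0 := by
    unfold qfun
    rw [fwd_iter_sum]
    have h3 : ∀ j ∈ Finset.range 9,
        fwd^[9] (fun M => vL j * ((2*M+4).choose j : ℤ) + wL j * ((2*M).choose j : ℤ))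
          = fun _ => (0:ℤ) := by
      intro j hj
      have hj9 : j < 9 := Finset.mem_range.mp hj
      have hadd := fwd_iter_add 9 (fun M => vL j * ((2*M+4).choose j : ℤ))
        (fun M => wL j * ((2*M).choose j : ℤ))
      rw [hadd, fwd_iter_smul, fwd_iter_smul]
      have k4 : fwd^[9] (fun M => ((2*M+4).choose j : ℤ)) = fun _ => 0 := by
        rw [show (9:ℕ) = (8-j)+(j+1) by omega, Function.iterate_add_apply, atom_kill j 4,
          fwd_iter_zero]
      have k0 : fwd^[9] (fun M => ((2*M).choose j : ℤ)) = fun _ => 0 := by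
        have := atom_kill j 0
        simp only [Nat.add_zero] at this
        rw [show (9:ℕ) = (8-j)+(j+1) by omega, Function.iterate_add_apply, this, fwd_iter_zero]
      rw [k4, k0]
      funext M; simp
    funext M
    rw [Finset.sum_congr rfl fun j hj => congrFun (h3 j hj) M]
    simp
  rw [h1, h2, sign_iter]
  funext M
  norm_num

theorem hdvd : ∀ i, (512:ℤ) ∣ fwd^[i] hfun 0 := by
  intro i
  rcases le_or_gt i 8 with h | h
  · interval_cases i
    · rw [Function.iterate_zero_apply, hv0]; exact dvd_zero _
    · norm_num [Function.iterate_succ', Function.comp_def, fwd, hv0, hv1]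
    · norm_num [Function.iterate_succ', Function.comp_def, fwd, hv0, hv1, hv2]
    · norm_num [Function.iterate_succ', Function.comp_def, fwd, hv0, hv1, hv2, hv3]
    · norm_num [Function.iterate_succ', Function.comp_def, fwd, hv0, hv1, hv2, hv3, hv4]
    · norm_num [Function.iterate_succ', Function.comp_def, fwd, hv0, hv1, hv2, hv3, hv4, hv5]
    · norm_num [Function.iterate_succ', Function.comp_def, fwd, hv0, hv1, hv2, hv3, hv4, hv5, hv6]
    · norm_num [Function.iterate_succ', Function.comp_def, fwd, hv0, hv1, hv2, hv3, hv4, hv5, hv6,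
        hv7]
    · norm_num [Function.iterate_succ', Function.comp_def, fwd, hv0, hv1, hv2, hv3, hv4, hv5, hv6,
        hv7, hv8]
  · obtain ⟨j, rfl⟩ : ∃ j, i = j + 9 := ⟨i - 9, by omega⟩
    rw [Function.iterate_add_apply, h9, sign_iter]
    exact ⟨192 * (-2)^j * (-1)^(0:ℕ), by ring⟩

theorem hfun_dvd : ∀ M, (512:ℤ) ∣ hfun M := dvd512 hfun hdvd

theorem sum_even (u : ℕ → ℤ) (h : ∀ s, u (2*s+1) = 0) (n : ℕ) :
    ∑ s ∈ Finset.range (2*n+1), u s = ∑ r ∈ Finset.range (n+1), u (2*r) := by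
  induction n with
  | zero => simp
  | succ n ih =>
    have e1 : 2*(n+1)+1 = (2*n+1)+1+1 := by ring
    rw [e1, Finset.sum_range_succ, Finset.sum_range_succ, ih, Finset.sum_range_succ, h n]
    have e2 : 2*n+1+1 = 2*(n+1) := by ring
    rw [e2]
    rw [Finset.sum_range_succ (fun x => u (2*x)) (n+1), Finset.sum_range_succ (fun x => u (2*x)) n]
    ring

theorem Tid (N j : ℕ) (hj : j < 2*N) :
    ∑ r ∈ Finset.range (N+1), (((2*N).choose (2*r) : ℤ) * ((2*r).choose j : ℤ))
      = ((2*N).choose j : ℤ) * 2^(2*N-1-j) := by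
  set u : ℕ → ℤ := fun s => (1 + (-1)^s) * ((2*N).choose s : ℤ) * (s.choose j : ℤ) with hu
  have hodd : ∀ s, u (2*s+1) = 0 := by
    intro s
    simp only [hu]
    rw [pow_add, pow_mul]
    norm_num
  have heven : ∀ r, u (2*r) = 2 * (((2*N).choose (2*r) : ℤ) * ((2*r).choose j : ℤ)) := by
    intro r
    simp only [hu]
    rw [pow_mul]
    norm_num
    ring
  have key : ∑ s ∈ Finset.range (2*N+1), u s
      = 2 * ∑ r ∈ Finset.range (N+1), (((2*N).choose (2*r) : ℤ) * ((2*r).choose j : ℤ)) := by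
    rw [sum_even u hodd N, Finset.mul_sum]
    exact Finset.sum_congr rfl fun r _ => heven r
  obtain ⟨d, hd⟩ : ∃ d, 2*N - j = d+1 := ⟨2*N-j-1, by omega⟩
  have hsplit : (2*N+1) = j + (d+2) := by omega
  have h1 : ∑ s ∈ Finset.range (2*N+1), u s
      = ∑ s ∈ Finset.range j, u s + ∑ t ∈ Finset.range (d+2), u (j+t) := by
    rw [hsplit, Finset.sum_range_add]
  have h2 : ∑ s ∈ Finset.range j, u s = 0 := by
    refine Finset.sum_eq_zero fun s hs => ?_
    have hz : s.choose j = 0 := Nat.choose_eq_zero_of_lt (Finset.mem_range.mp hs)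
    simp [hu, hz]
  have h3 : ∀ t ∈ Finset.range (d+2), u (j+t)
      = ((2*N).choose j : ℤ) * (((d+1).choose t : ℤ) + (-1)^j * ((-1)^t * ((d+1).choose t : ℤ))) := by
    intro t ht
    have htd : t ≤ d+1 := by
      have := Finset.mem_range.mp ht; omega
    have hc := Nat.choose_mul (n := 2*N) (k := j+t) (s := j) (by omega)
    have hjt : j + t - j = t := by omega
    rw [hjt, hd] at hc
    simp only [hu]
    have hcz : (((2*N).choose (j+t) : ℤ) * ((j+t).choose j : ℤ))
        = ((2*N).choose j : ℤ) * ((d+1).choose t : ℤ) := by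
      exact_mod_cast congrArg (Nat.cast : ℕ → ℤ) hc
    calc (1 + (-1)^(j+t)) * ((2*N).choose (j+t) : ℤ) * ((j+t).choose j : ℤ)
        = (1 + (-1)^j * (-1)^t) * (((2*N).choose (j+t) : ℤ) * ((j+t).choose j : ℤ)) := by
          rw [pow_add]; ring
      _ = (1 + (-1)^j * (-1)^t) * (((2*N).choose j : ℤ) * ((d+1).choose t : ℤ)) := by rw [hcz]
      _ = ((2*N).choose j : ℤ) * (((d+1).choose t : ℤ) + (-1)^j * ((-1)^t * ((d+1).choose t : ℤ))) := by
          ring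
  have h4 : ∑ t ∈ Finset.range (d+2), u (j+t)
      = ((2*N).choose j : ℤ) * (∑ t ∈ Finset.range (d+2), ((d+1).choose t : ℤ)
        + (-1)^j * ∑ t ∈ Finset.range (d+2), ((-1)^t * ((d+1).choose t : ℤ))) := by
    rw [Finset.sum_congr rfl h3, mul_add, Finset.mul_sum, Finset.mul_sum, Finset.mul_sum,
      ← Finset.sum_add_distrib]
    refine Finset.sum_congr rfl fun t _ => by ring
  have h5 : ∑ t ∈ Finset.range (d+2), ((d+1).choose t : ℤ) = 2^(d+1) := by
    have := Nat.sum_range_choose (d+1)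
    exact_mod_cast congrArg (Nat.cast : ℕ → ℤ) this
  have h6 : ∑ t ∈ Finset.range (d+2), ((-1:ℤ)^t * ((d+1).choose t : ℤ)) = 0 :=
    Int.alternating_sum_range_choose_of_ne (by omega)
  have h7 : 2*N-1-j = d := by omega
  rw [h1, h2, h4, h5, h6, zero_add] at key
  rw [h7]
  have : ((2*N).choose j : ℤ) * (2^(d+1) + (-1)^j * 0) = 2 * (((2*N).choose j : ℤ) * 2^d) := by
    ring
  rw [this] at key
  exact (mul_left_cancel₀ (two_ne_zero) key).symm


theorem recur (m : ℕ) : eulerE (2*m+2) =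
    -∑ r ∈ Finset.range (m+1), (((2*m+2).choose (2*r) : ℤ) * eulerE (2*r)) := by
  rw [eulerE, if_pos (even_two_mul m), Nat.mul_div_cancel_left m two_pos,
    Finset.sum_attach (Finset.range (m+1)) (fun r => ((2*m+2).choose (2*r) : ℤ) * eulerE (2*r))]

theorem e0 : eulerE 0 = 1 := by rw [eulerE]
theorem e1 : eulerE 2 = -1 := by
  have := recur 0
  norm_num [Finset.sum_range_succ, e0] at this; exact this
theorem e2 : eulerE 4 = 5 := by
  have := recur 1
  norm_num [Finset.sum_range_succ, e0, e1] at this; exact this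
theorem e3 : eulerE 6 = -61 := by
  have := recur 2
  norm_num [Finset.sum_range_succ, e0, e1, e2] at this; exact this
theorem e4 : eulerE 8 = 1385 := by
  have := recur 3
  norm_num [Finset.sum_range_succ, e0, e1, e2, e3] at this; exact this
theorem e5 : eulerE 10 = -50521 := by
  have := recur 4
  norm_num [Finset.sum_range_succ, e0, e1, e2, e3, e4] at this; exact this
theorem e6 : eulerE 12 = 2702765 := by
  have := recur 5
  norm_num [Finset.sum_range_succ, e0, e1, e2, e3, e4, e5] at this; exact this
theorem e7 : eulerE 14 = -199360981 := by
  have := recur 6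
  norm_num [Finset.sum_range_succ, e0, e1, e2, e3, e4, e5, e6] at this; exact this
theorem e8 : eulerE 16 = 19391512145 := by
  have := recur 7
  norm_num [Finset.sum_range_succ, e0, e1, e2, e3, e4, e5, e6, e7] at this; exact this

theorem euler_FF : ∀ n, (512:ℤ) ∣ eulerE (2*n) - FF n := by
  intro n
  induction n using Nat.strong_induction_on with
  | _ n IH =>
    rcases le_or_gt n 8 with h | h
    · interval_cases n
      · rw [show (2*0 : ℕ) = 0 from rfl, e0]; decide
      · rw [show (2*1 : ℕ) = 2 from rfl, e1]; decide
      · rw [show (2*2 : ℕ) = 4 from rfl, e2]; decide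
      · rw [show (2*3 : ℕ) = 6 from rfl, e3]; decide
      · rw [show (2*4 : ℕ) = 8 from rfl, e4]; decide
      · rw [show (2*5 : ℕ) = 10 from rfl, e5]; decide
      · rw [show (2*6 : ℕ) = 12 from rfl, e6]; decide
      · rw [show (2*7 : ℕ) = 14 from rfl, e7]; decide
      · rw [show (2*8 : ℕ) = 16 from rfl, e8]; decide
    · obtain ⟨m, rfl⟩ : ∃ m, n = m+1 := ⟨n-1, by omega⟩
      rw [show 2*(m+1) = 2*m+2 by ring, recur m]
      have key : -∑ r ∈ Finset.range (m+1), (((2*m+2).choose (2*r) : ℤ) * eulerE (2*r)) - FF (m+1)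
          = (-∑ r ∈ Finset.range (m+1), (((2*m+2).choose (2*r) : ℤ) * (eulerE (2*r) - FF r)))
            - ∑ r ∈ Finset.range (m+2), (((2*m+2).choose (2*r) : ℤ) * FF r) := by
        rw [Finset.sum_range_succ (fun r => ((2*m+2).choose (2*r) : ℤ) * FF r) (m+1)]
        rw [show (2*m+2).choose (2*(m+1)) = 1 by
          rw [show 2*(m+1) = 2*m+2 by ring, Nat.choose_self]]
        simp only [mul_sub]
        rw [Finset.sum_sub_distrib]
        push_cast
        ring
      rw [key]
      have d1 : (512:ℤ) ∣ -∑ r ∈ Finset.range (m+1), (((2*m+2).choose (2*r) : ℤ) * (eulerE (2*r) - FF r)) := by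
        refine dvd_neg.mpr (Finset.dvd_sum fun r hr => Dvd.dvd.mul_left (IH r ?_) _)
        have := Finset.mem_range.mp hr
        omega
      have d2 : (512:ℤ) ∣ ∑ r ∈ Finset.range (m+2), (((2*m+2).choose (2*r) : ℤ) * FF r) := by
        rw [show (2*m+2) = 2*(m+1) by ring]
        have swap : ∑ r ∈ Finset.range (m+2), (((2*(m+1)).choose (2*r) : ℤ) * FF r)
            = ∑ j ∈ Finset.range 9, vL j * ∑ r ∈ Finset.range (m+2),
                (((2*(m+1)).choose (2*r) : ℤ) * ((2*r).choose j : ℤ)) := by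
          simp only [FF, Finset.mul_sum]
          rw [Finset.sum_comm]
          refine Finset.sum_congr rfl fun j _ => Finset.sum_congr rfl fun r _ => by ring
        rw [swap]
        refine Finset.dvd_sum fun j hj => ?_
        have hj9 : j < 9 := Finset.mem_range.mp hj
        rw [Tid (m+1) j (by omega)]
        have hpow : (512:ℤ) ∣ 2^(2*(m+1)-1-j) := by
          rw [show (512:ℤ) = 2^9 by norm_num]
          exact pow_dvd_pow 2 (by omega)
        exact (hpow.mul_left _).mul_left _
      exact dvd_sub d1 d2

theorem c2 (M : ℕ) : ((2*M).choose 2 : ℤ) = 2*(M:ℤ)^2 - M := by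
  rw [Nat.choose_two_right]
  cases M with
  | zero => rfl
  | succ N =>
    rw [show 2*(N+1)-1 = 2*N+1 by omega, show 2*(N+1)*(2*N+1) = ((N+1)*(2*N+1))*2 by ring,
      Nat.mul_div_cancel _ two_pos]
    push_cast
    ring

theorem bridge (M : ℕ) : hfun M = FF (M+2) - FF M
    - (56*((2*M).choose 2:ℤ) + 132*((2*M).choose 1:ℤ) - 188) - 192*(-1)^M := by
  show qfun M + (-192) * (-1)^M = _
  unfold qfun FF
  rw [show 2*(M+2) = 2*M+4 by ring]
  simp only [Finset.sum_range_succ, Finset.sum_range_zero, vL, wL]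
  norm_num
  ring

def Rz (m k : ℕ) : ℤ :=
  4*(k:ℤ)*(7*(2*(m:ℤ)+1)^2 - 18 + 12*(k:ℤ)*(2*(m:ℤ)+1+4*((-1)^m - (k:ℤ))))

theorem negpow (m k : ℕ) : ((-1:ℤ))^(m+2*k) = (-1)^m := by
  rw [pow_add, pow_mul]; norm_num

theorem part2 (m k : ℕ) : (512:ℤ) ∣ FF (m + 2*k) - FF m - Rz m k := by
  induction k with
  | zero => norm_num [Rz]
  | succ k IH =>
    have hb := hfun_dvd (m+2*k)
    rw [bridge, c2 (m+2*k), Nat.choose_one_right, negpow m k] at hb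
    have harg : m + 2*(k+1) = (m+2*k)+2 := by ring
    rw [harg]
    obtain ⟨x, hx⟩ := IH
    obtain ⟨y, hy⟩ := hb
    rcases Nat.even_or_odd m with ⟨a, ha⟩ | ⟨a, ha⟩
    · have e1 : ((-1:ℤ))^m = 1 := Even.neg_one_pow ⟨a, ha⟩
      refine ⟨x + y + ((k:ℤ) + 2*(k:ℤ)^2 + (a:ℤ)*k), ?_⟩
      simp only [Rz, e1] at hx hy ⊢
      subst ha
      push_cast at hx hy ⊢
      linear_combination hx + hy
    · have e1 : ((-1:ℤ))^m = -1 := Odd.neg_one_pow ⟨a, ha⟩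
      refine ⟨x + y + (3*(k:ℤ) + 2*(k:ℤ)^2 + (a:ℤ)*k), ?_⟩
      simp only [Rz, e1] at hx hy ⊢
      subst ha
      push_cast at hx hy ⊢
      linear_combination hx + hy

end SternProof

theorem stern_ext_m_eq_two (b k : ℕ) (hb : Even b) (hk : 0 < k) :
    eulerE (4 * k + b) - eulerE b ≡
      4 * k * (7 * ((b : ℤ) + 1) ^ 2 - 18
        + 12 * k * ((b : ℤ) + 1 + 4 * ((-1) ^ (b / 2) - k))) [ZMOD 2 ^ 9] := by
  obtain ⟨m, hm⟩ := hb
  have hb2 : b = 2*m := by omega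
  subst hb2
  have h1 := SternProof.euler_FF (m + 2*k)
  have h2 := SternProof.euler_FF m
  have h3 := SternProof.part2 m k
  rw [show 4*k + 2*m = 2*(m + 2*k) by ring, show 2*m/2 = m by omega]
  refine Int.ModEq.symm (Int.modEq_iff_dvd.mpr ?_)
  obtain ⟨x, hx⟩ := h1
  obtain ⟨y, hy⟩ := h2
  obtain ⟨z, hz⟩ := h3
  refine ⟨x - y + z, ?_⟩
  simp only [SternProof.Rz] at hz
  push_cast at hx hy hz ⊢
  linear_combination hx - hy + hz
end

section
/- Let b be a nonnegative even integer and let k and m be positive integers with m ≥ 2. Then E_{2^m k + b} ≡ E_b + 2^m k (mod 2^{m+2}). -/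
lemma eulerE_odd_s12 (n : ℕ) (h : ¬ Even n) : eulerE n = 0 := by
  match n with
  | 0 => simp at h
  | 1 => rw [eulerE]
  | n + 2 =>
    rw [eulerE]
    have : ¬ Even n := by simpa [Nat.even_add] using h
    simp [this]

lemma euler_rec (n : ℕ) (h0 : 0 < n) (he : Even n) :
    ∑ r ∈ Finset.range (n/2 + 1), ((n.choose (2*r) : ℤ)) * eulerE (2*r) = 0 := by
  obtain ⟨d, rfl⟩ : ∃ d, n = d + 2 := by
    obtain ⟨t, ht⟩ := he
    refine ⟨n - 2, by omega⟩
  have hd : Even d := by simpa [Nat.even_add] using he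
  have hdef := eulerE.eq_3 d
  rw [if_pos hd, Finset.sum_attach (Finset.range (d/2+1))
    (fun r => ((d + 2).choose (2 * r) : ℤ) * eulerE (2 * r))] at hdef
  have hhalf : (d+2)/2 = d/2 + 1 := by omega
  rw [hhalf, Finset.sum_range_succ]
  have h2 : 2 * (d/2 + 1) = d + 2 := by
    obtain ⟨t, rfl⟩ := hd; omega
  rw [h2, Nat.choose_self, hdef]
  push_cast
  ring

lemma sum_even_split (M : ℕ) (g : ℕ → ℤ) :
    ∑ k ∈ Finset.range (2*M+1), (if Even k then g k else 0)
      = ∑ r ∈ Finset.range (M+1), g (2*r) := by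
  induction M with
  | zero => simp
  | succ M ih =>
    have e : 2*(M+1)+1 = (2*M+1) + 1 + 1 := by omega
    rw [e, Finset.sum_range_succ, Finset.sum_range_succ (n := 2*M+1), ih,
      Finset.sum_range_succ (n := M+1)]
    have h1 : ¬ Even (2*M+1) := by simp [Nat.even_add_one, parity_simps]
    have h2 : Even (2*M+1+1) := by simp [Nat.even_add_one, parity_simps]
    rw [if_neg h1, if_pos h2]
    have : 2*M+1+1 = 2*(M+1) := by omega
    rw [this]
    ring

lemma euler_rec' (n : ℕ) (h0 : 0 < n) (he : Even n) :
    ∑ k ∈ Finset.range (n+1), (if Even k then (n.choose k : ℤ) * eulerE (n-k) else 0) = 0 := by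
  have hrefl := Finset.sum_range_reflect
    (fun k => if Even k then (n.choose k : ℤ) * eulerE (n-k) else 0) (n+1)
  simp only [Nat.add_sub_cancel] at hrefl
  rw [← hrefl]
  have hcongr : ∀ k ∈ Finset.range (n+1),
      (if Even (n-k) then (n.choose (n-k) : ℤ) * eulerE (n-(n-k)) else 0)
        = (if Even k then (n.choose k : ℤ) * eulerE k else 0) := by
    intro k hk
    rw [Finset.mem_range] at hk
    have hkn : k ≤ n := by omega
    have hs : Even (n-k) ↔ Even k := by
      rw [Nat.even_sub hkn]
      exact ⟨fun h => (h.mp he), fun h => ⟨fun _ => h, fun _ => he⟩⟩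
    rw [Nat.choose_symm hkn, Nat.sub_sub_self hkn]
    by_cases h : Even k
    · rw [if_pos (hs.mpr h), if_pos h]
    · rw [if_neg (fun hh => h (hs.mp hh)), if_neg h]
  rw [Finset.sum_congr rfl hcongr]
  obtain ⟨M, hM⟩ : ∃ M, n = 2*M := by obtain ⟨t, ht⟩ := he; exact ⟨t, by omega⟩
  subst hM
  rw [sum_even_split M (fun k => (( (2*M).choose k : ℤ)) * eulerE k)]
  have := euler_rec (2*M) h0 he
  have hM2 : (2*M)/2 = M := by omega
  rw [hM2] at this
  exact this


open Polynomial

noncomputable def Lop (p : ℤ[X]) : ℤ[X] :=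
  p.sum fun j a => Polynomial.C a *
    (Polynomial.C ((2*(j:ℤ)+1)^2) * X ^ j - Polynomial.C ((2*(j:ℤ)+1)*(2*(j:ℤ)+2)) * X ^ (j+1))

lemma Lop_monomial (j : ℕ) (a : ℤ) :
    Lop (Polynomial.C a * X ^ j) = Polynomial.C a *
      (Polynomial.C ((2*(j:ℤ)+1)^2) * X ^ j - Polynomial.C ((2*(j:ℤ)+1)*(2*(j:ℤ)+2)) * X ^ (j+1)) := by
  rw [Polynomial.C_mul_X_pow_eq_monomial, Lop, Polynomial.sum_monomial_index]
  simp

lemma Lop_add (p q : ℤ[X]) : Lop (p + q) = Lop p + Lop q := by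
  unfold Lop
  rw [Polynomial.sum_add_index] <;> intros <;> simp [add_mul]

lemma Lop_Cmul (a : ℤ) (p : ℤ[X]) : Lop (Polynomial.C a * p) = Polynomial.C a * Lop p := by
  unfold Lop
  rw [← smul_eq_C_mul, Polynomial.sum_smul_index p a _ (by intro i; simp)]
  rw [Polynomial.sum_def, Polynomial.sum_def, Finset.mul_sum]
  apply Finset.sum_congr rfl
  intro i _
  rw [Polynomial.C_mul, mul_assoc]

/-- coefficient functions for `Cop` -/
def c0 (x : ℤ) : ℤ := 4*x*(x+1)*(2*x^2+2*x+1)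
def c1 (x : ℤ) : ℤ := 2*(2*x+1)*(x+1)*(4*x^2+8*x+5)
def c2 (x : ℤ) : ℤ := 2*(2*x+1)*(x+1)*(2*x+3)*(x+2)

noncomputable def Cmono (j : ℕ) : ℤ[X] :=
  Polynomial.C (c0 (j:ℤ)) * X ^ j - Polynomial.C (c1 (j:ℤ)) * X ^ (j+1)
    + Polynomial.C (c2 (j:ℤ)) * X ^ (j+2)

noncomputable def Cop (p : ℤ[X]) : ℤ[X] := p.sum fun j a => Polynomial.C a * Cmono j

lemma Cop_monomial (j : ℕ) (a : ℤ) :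
    Cop (Polynomial.C a * X ^ j) = Polynomial.C a * Cmono j := by
  rw [Polynomial.C_mul_X_pow_eq_monomial, Cop, Polynomial.sum_monomial_index]
  simp

lemma Cop_add (p q : ℤ[X]) : Cop (p + q) = Cop p + Cop q := by
  unfold Cop
  rw [Polynomial.sum_add_index] <;> intros <;> simp [add_mul]

lemma Cop_Cmul (a : ℤ) (p : ℤ[X]) : Cop (Polynomial.C a * p) = Polynomial.C a * Cop p := by
  unfold Cop
  rw [← smul_eq_C_mul, Polynomial.sum_smul_index p a _ (by intro i; simp)]
  rw [Polynomial.sum_def, Polynomial.sum_def, Finset.mul_sum]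
  apply Finset.sum_congr rfl
  intro i _
  rw [Polynomial.C_mul, mul_assoc]

lemma Lop_sub (p q : ℤ[X]) : Lop (p - q) = Lop p - Lop q := by
  have h := Lop_add (p - q) q
  rw [sub_add_cancel] at h
  rw [h]; ring

lemma Cop_sub (p q : ℤ[X]) : Cop (p - q) = Cop p - Cop q := by
  have h := Cop_add (p - q) q
  rw [sub_add_cancel] at h
  rw [h]; ring

lemma LL_eq (p : ℤ[X]) : Lop (Lop p) = p + 2 * Cop p := by
  induction p using Polynomial.induction_on' with
  | add p q hp hq => rw [Lop_add, Lop_add, hp, hq, Cop_add]; ring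
  | monomial j a =>
    rw [← Polynomial.C_mul_X_pow_eq_monomial, Lop_monomial, mul_sub, ← mul_assoc,
      ← Polynomial.C_mul, ← mul_assoc, ← Polynomial.C_mul, Lop_sub, Lop_monomial, Lop_monomial,
      Cop_monomial, Cmono]
    push_cast
    rw [Polynomial.C_mul, Polynomial.C_mul]
    simp only [c0, c1, c2]
    push_cast [Polynomial.C_add, Polynomial.C_mul, Polynomial.C_pow, Polynomial.C_1, map_ofNat]
    ring

lemma dvd8 (x r : ℤ) : (8:ℤ) ∣ 4*(x*(x+1))*r := by
  obtain ⟨e, he⟩ := Int.even_mul_succ_self x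
  exact ⟨e*r, by linear_combination 4*r*he⟩

lemma dvd8_c0 (x : ℤ) : (8:ℤ) ∣ c0 x := by
  have h : c0 x = 4*(x*(x+1))*(2*x^2+2*x+1) := by unfold c0; ring
  rw [h]; exact dvd8 x _

lemma dvd8_c1c1 (x : ℤ) : (8:ℤ) ∣ c1 x * c1 (x+1) := by
  have h : c1 x * c1 (x+1) = 4*((x+1)*((x+1)+1))*
      ((2*x+1)*(4*x^2+8*x+5)*(2*x+3)*(4*x^2+16*x+17)) := by unfold c1; ring
  rw [h]; exact dvd8 (x+1) _

lemma dvd8_c1c2 (x : ℤ) : (8:ℤ) ∣ c1 x * c2 (x+1) := by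
  have h : c1 x * c2 (x+1) = 4*((x+1)*((x+1)+1))*
      ((2*x+1)*(4*x^2+8*x+5)*(2*x+3)*(2*x+5)*(x+3)) := by unfold c1 c2; ring
  rw [h]; exact dvd8 (x+1) _

lemma dvd8_c2c1 (x : ℤ) : (8:ℤ) ∣ c2 x * c1 (x+2) := by
  have h : c2 x * c1 (x+2) = 4*((x+1)*((x+1)+1))*
      ((2*x+1)*(2*x+3)*(2*x+5)*(x+3)*(4*x^2+24*x+37)) := by unfold c1 c2; ring
  rw [h]; exact dvd8 (x+1) _

lemma dvd8_c2c2 (x : ℤ) : (8:ℤ) ∣ c2 x * c2 (x+2) := by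
  have h : c2 x * c2 (x+2) = 4*((x+1)*((x+1)+1))*
      ((2*x+1)*(2*x+3)*(2*x+5)*(x+3)*(2*x+7)*(x+4)) := by unfold c2; ring
  rw [h]; exact dvd8 (x+1) _

lemma Cdvd {x : ℤ} (h : (8:ℤ) ∣ x) (q : ℤ[X]) : (8:ℤ[X]) ∣ Polynomial.C x * q := by
  obtain ⟨y, rfl⟩ := h
  exact ⟨Polynomial.C y * q, by rw [Polynomial.C_mul]; push_cast [map_ofNat]; ring⟩

lemma Cop_Cmono (j : ℕ) : Cop (Cmono j) =
    Polynomial.C (c0 (j:ℤ)) * Cmono j - Polynomial.C (c1 (j:ℤ)) * Cmono (j+1)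
      + Polynomial.C (c2 (j:ℤ)) * Cmono (j+2) := by
  rw [Cmono, Cop_add, Cop_sub, Cop_monomial, Cop_monomial, Cop_monomial]
  simp [Cmono]

lemma CopCop_dvd (p : ℤ[X]) : (8:ℤ[X]) ∣ Cop (Cop p) := by
  induction p using Polynomial.induction_on' with
  | add p q hp hq => rw [Cop_add, Cop_add]; exact dvd_add hp hq
  | monomial j a =>
    rw [← Polynomial.C_mul_X_pow_eq_monomial, Cop_monomial, Cop_Cmul, Cop_Cmono]
    apply Dvd.dvd.mul_left _ (Polynomial.C a)
    have e1 : Cmono (j+1) = Polynomial.C (c0 ((j:ℤ)+1)) * X ^ (j+1)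
        - Polynomial.C (c1 ((j:ℤ)+1)) * X ^ (j+2) + Polynomial.C (c2 ((j:ℤ)+1)) * X ^ (j+3) := by
      rw [Cmono]; push_cast; ring
    have e2 : Cmono (j+2) = Polynomial.C (c0 ((j:ℤ)+2)) * X ^ (j+2)
        - Polynomial.C (c1 ((j:ℤ)+2)) * X ^ (j+3) + Polynomial.C (c2 ((j:ℤ)+2)) * X ^ (j+4) := by
      rw [Cmono]; push_cast; ring
    rw [e1, e2]
    have expand : Polynomial.C (c0 (j:ℤ)) * Cmono j -
        Polynomial.C (c1 (j:ℤ)) * (Polynomial.C (c0 ((j:ℤ)+1)) * X ^ (j+1)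
          - Polynomial.C (c1 ((j:ℤ)+1)) * X ^ (j+2) + Polynomial.C (c2 ((j:ℤ)+1)) * X ^ (j+3))
        + Polynomial.C (c2 (j:ℤ)) * (Polynomial.C (c0 ((j:ℤ)+2)) * X ^ (j+2)
          - Polynomial.C (c1 ((j:ℤ)+2)) * X ^ (j+3) + Polynomial.C (c2 ((j:ℤ)+2)) * X ^ (j+4))
      = Polynomial.C (c0 (j:ℤ)) * Cmono j
        - Polynomial.C (c1 (j:ℤ) * c0 ((j:ℤ)+1)) * X ^ (j+1)
        + Polynomial.C (c1 (j:ℤ) * c1 ((j:ℤ)+1)) * X ^ (j+2)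
        - Polynomial.C (c1 (j:ℤ) * c2 ((j:ℤ)+1)) * X ^ (j+3)
        + Polynomial.C (c2 (j:ℤ) * c0 ((j:ℤ)+2)) * X ^ (j+2)
        - Polynomial.C (c2 (j:ℤ) * c1 ((j:ℤ)+2)) * X ^ (j+3)
        + Polynomial.C (c2 (j:ℤ) * c2 ((j:ℤ)+2)) * X ^ (j+4) := by
      simp only [Polynomial.C_mul]; ring
    rw [expand]
    apply dvd_add
    apply dvd_sub
    apply dvd_add
    apply dvd_sub
    apply dvd_add
    apply dvd_sub
    · exact Cdvd (dvd8_c0 _) _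
    · exact Cdvd ((dvd8_c0 _).mul_left _) _
    · exact Cdvd (dvd8_c1c1 _) _
    · exact Cdvd (dvd8_c1c2 _) _
    · exact Cdvd ((dvd8_c0 _).mul_left _) _
    · exact Cdvd (dvd8_c2c1 _) _
    · exact Cdvd (dvd8_c2c2 _) _

lemma Lit_add (n : ℕ) (p q : ℤ[X]) : Lop^[n] (p + q) = Lop^[n] p + Lop^[n] q := by
  induction n generalizing p q with
  | zero => simp
  | succ n ih => simp only [Function.iterate_succ_apply', ih, Lop_add]

lemma Lit_Cmul (n : ℕ) (a : ℤ) (p : ℤ[X]) :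
    Lop^[n] (Polynomial.C a * p) = Polynomial.C a * Lop^[n] p := by
  induction n generalizing p with
  | zero => simp
  | succ n ih => simp only [Function.iterate_succ_apply', ih, Lop_Cmul]

lemma main_step : ∀ (s : ℕ) (p : ℤ[X]), ∃ u, Lop^[2^(s+1)] p
    = p + Polynomial.C (2^(s+1)) * Cop p + Polynomial.C (2^(s+4)) * u := by
  intro s
  induction s with
  | zero =>
    intro p
    refine ⟨0, ?_⟩
    have h2 : Lop^[2^(0+1)] p = Lop (Lop p) := by
      norm_num
    rw [h2, LL_eq]
    norm_num
  | succ s ih =>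
    intro p
    obtain ⟨u, h1⟩ := ih p
    obtain ⟨u₁, h2⟩ := ih (Cop p)
    obtain ⟨u₂, h3⟩ := ih u
    obtain ⟨w₁, hw⟩ := CopCop_dvd p
    refine ⟨u + Polynomial.C (2^s) * (w₁ + u₁ + Cop u) + Polynomial.C (2^(s+3)) * u₂, ?_⟩
    have hit : Lop^[2^(s+1+1)] p = Lop^[2^(s+1)] (Lop^[2^(s+1)] p) := by
      rw [← Function.iterate_add_apply]
      congr 1
      rw [pow_succ 2 (s+1)]
      omega
    rw [hit, h1, Lit_add, Lit_add, Lit_Cmul, Lit_Cmul, h1, h2, h3, hw]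
    have eA : (2:ℤ)^(s+1+1) = 4*2^s := by ring
    have eB : (2:ℤ)^(s+1+4) = 32*2^s := by ring
    have eC : (2:ℤ)^(s+1) = 2*2^s := by ring
    have eD : (2:ℤ)^(s+4) = 16*2^s := by ring
    have eE : (2:ℤ)^(s+3) = 8*2^s := by ring
    rw [eA, eB, eC, eD, eE]
    simp only [Polynomial.C_mul, map_ofNat]
    ring

lemma Lop_one : Lop 1 = 1 - Polynomial.C 2 * X := by
  have h := Lop_monomial 0 1
  norm_num at h
  rw [h]; push_cast [map_ofNat]; ring

lemma Lop_X : Lop X = Polynomial.C 9 * X - Polynomial.C 12 * X^2 := by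
  have h := Lop_monomial 1 1
  norm_num at h
  rw [h]; push_cast [map_ofNat]; ring

lemma Lop_X2 (r : ℤ[X]) : ∃ r', Lop (X^2 * r) = X^2 * r' := by
  induction r using Polynomial.induction_on' with
  | add p q hp hq =>
    obtain ⟨p', hp⟩ := hp; obtain ⟨q', hq⟩ := hq
    exact ⟨p' + q', by rw [mul_add, Lop_add, hp, hq, mul_add]⟩
  | monomial j a =>
    refine ⟨Polynomial.C a * (Polynomial.C ((2*((j:ℤ)+2)+1)^2) * X ^ j
      - Polynomial.C ((2*((j:ℤ)+2)+1)*(2*((j:ℤ)+2)+2)) * X ^ (j+1)), ?_⟩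
    have e : X^2 * (Polynomial.monomial j a : ℤ[X]) = Polynomial.C a * X^(j+2) := by
      rw [← Polynomial.C_mul_X_pow_eq_monomial]; ring
    rw [e, Lop_monomial]
    push_cast
    ring

lemma shape (n : ℕ) : ∃ (a : ℤ) (r : ℤ[X]),
    Lop^[n] 1 = 1 + Polynomial.C (2*a) * X + Polynomial.C 8 * (X^2 * r) := by
  induction n with
  | zero => exact ⟨0, 0, by simp⟩
  | succ n ih =>
    obtain ⟨a, r, h⟩ := ih
    obtain ⟨r', hr'⟩ := Lop_X2 r
    refine ⟨9*a - 1, r' - Polynomial.C (3*a), ?_⟩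
    rw [Function.iterate_succ_apply', h, Lop_add, Lop_add, Lop_Cmul, Lop_Cmul, Lop_one, Lop_X, hr']
    simp only [Polynomial.C_mul, Polynomial.C_sub, map_ofNat, Polynomial.C_1]
    ring

lemma Cop_one : Cop 1 = Cmono 0 := by
  have h := Cop_monomial 0 1
  norm_num at h
  rw [h]

lemma Cop_X : Cop X = Cmono 1 := by
  have h := Cop_monomial 1 1
  norm_num at h
  rw [h]

lemma eval_Cop (n : ℕ) : ∃ z : ℤ, (Cop (Lop^[n] 1)).eval 1 = 2 + 8*z := by
  obtain ⟨a, r, h⟩ := shape n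
  refine ⟨4*a + (Cop (X^2*r)).eval 1, ?_⟩
  rw [h, Cop_add, Cop_add, Cop_Cmul, Cop_Cmul, Cop_one, Cop_X]
  have e0 : (Cmono 0).eval 1 = 2 := by simp [Cmono, c0, c1, c2]
  have e1 : (Cmono 1).eval 1 = 16 := by norm_num [Cmono, c0, c1, c2]
  simp [e0, e1]
  ring

lemma partB (s k n : ℕ) :
    (2^(s+4) : ℤ) ∣ ((Lop^[n + 2^(s+1) * k] 1).eval 1 - (Lop^[n] 1).eval 1 - 2^(s+2) * (k:ℤ)) := by
  induction k with
  | zero => simp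
  | succ k ih =>
    have hidx : n + 2^(s+1) * (k+1) = 2^(s+1) + (n + 2^(s+1)*k) := by ring
    rw [hidx, Function.iterate_add_apply]
    obtain ⟨u, hu⟩ := main_step s (Lop^[n + 2^(s+1)*k] 1)
    obtain ⟨z, hz⟩ := eval_Cop (n + 2^(s+1)*k)
    obtain ⟨q, hq⟩ := ih
    rw [hu]
    refine ⟨q + z + (u.eval 1), ?_⟩
    simp only [Polynomial.eval_add, Polynomial.eval_mul, Polynomial.eval_C, hz]
    push_cast
    linear_combination hq


open PowerSeries

noncomputable def fE : ℚ⟦X⟧ := PowerSeries.mk fun n => (eulerE n : ℚ) / n.factorial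
noncomputable def ch : ℚ⟦X⟧ := PowerSeries.mk fun n => if Even n then (1:ℚ) / n.factorial else 0
noncomputable def sh : ℚ⟦X⟧ := PowerSeries.mk fun n => if Even n then 0 else (1:ℚ) / n.factorial

lemma constantCoeff_fE : PowerSeries.constantCoeff fE = 1 := by
  have : PowerSeries.constantCoeff fE = PowerSeries.coeff 0 fE := by
    rw [PowerSeries.coeff_zero_eq_constantCoeff]
  rw [this, fE, PowerSeries.coeff_mk]
  show ((eulerE 0 : ℚ)) / (Nat.factorial 0) = 1
  rw [eulerE]
  norm_num

lemma ch_mul_fE : ch * fE = 1 := by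
  ext n
  rw [PowerSeries.coeff_mul, PowerSeries.coeff_one,
    Finset.Nat.sum_antidiagonal_eq_sum_range_succ_mk]
  simp only [ch, fE, PowerSeries.coeff_mk]
  rcases Nat.eq_zero_or_pos n with rfl | hn
  · norm_num [eulerE]
  · rw [if_neg (by omega)]
    have hterm : ∀ k ∈ Finset.range (n+1),
        (if Even k then (1:ℚ) / k.factorial else 0) * ((eulerE (n-k) : ℚ) / (n-k).factorial)
        = ((if Even k then ((n.choose k : ℤ) * eulerE (n-k) : ℤ) else 0 : ℤ) : ℚ) / n.factorial := by
      intro k hk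
      rw [Finset.mem_range] at hk
      have hkn : k ≤ n := by omega
      have hfact : (n.choose k : ℚ) * (k.factorial : ℚ) * ((n-k).factorial : ℚ)
          = (n.factorial : ℚ) := by
        rw [← Nat.cast_mul, ← Nat.cast_mul, Nat.choose_mul_factorial_mul_factorial hkn]
      by_cases h : Even k
      · rw [if_pos h, if_pos h]
        push_cast
        rw [div_mul_div_comm, one_mul, div_eq_div_iff (by positivity) (by positivity)]
        rw [← hfact]
        ring
      · rw [if_neg h, if_neg h]
        simp
    rw [Finset.sum_congr rfl hterm, ← Finset.sum_div, ← Int.cast_sum]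
    by_cases he : Even n
    · rw [euler_rec' n hn he]
      simp
    · have hz : ∀ k ∈ Finset.range (n+1),
          (if Even k then ((n.choose k : ℤ)) * eulerE (n-k) else 0) = 0 := by
        intro k hk
        rw [Finset.mem_range] at hk
        by_cases h : Even k
        · rw [if_pos h]
          have : ¬ Even (n - k) := by
            rw [Nat.even_sub (by omega : k ≤ n)]
            tauto
          rw [eulerE_odd_s12 _ this, mul_zero]
        · rw [if_neg h]
      rw [Finset.sum_congr rfl hz]
      simp

lemma ch_add_sh : ch + sh = PowerSeries.exp ℚ := by
  ext n
  simp only [map_add, ch, sh, PowerSeries.coeff_mk, PowerSeries.coeff_exp]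
  by_cases h : Even n <;> simp [h, algebraMap]

lemma ch_sub_sh : ch - sh = PowerSeries.evalNegHom (PowerSeries.exp ℚ) := by
  ext n
  simp only [map_sub, ch, sh, PowerSeries.coeff_mk, PowerSeries.evalNegHom,
    PowerSeries.coeff_rescale, PowerSeries.coeff_exp]
  rcases Nat.even_or_odd n with h | h
  · obtain ⟨t, rfl⟩ := h
    simp [← two_mul, algebraMap]
  · have h2 : ¬ Even n := Nat.not_even_iff_odd.mpr h
    obtain ⟨t, rfl⟩ := h
    simp [h2, pow_succ, pow_mul, algebraMap]

lemma ch_sq : ch * ch = 1 + sh * sh := by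
  have h := PowerSeries.exp_mul_exp_neg_eq_one (A := ℚ)
  rw [← ch_sub_sh, ← ch_add_sh] at h
  linear_combination h

lemma deriv_ch : (d⁄dX ℚ) ch = sh := by
  ext n
  rw [PowerSeries.coeff_derivative]
  simp only [ch, sh, PowerSeries.coeff_mk]
  rcases Nat.even_or_odd n with h | h
  · have h1 : ¬ Even (n+1) := by simpa [Nat.even_add_one] using h
    simp [h, h1]
  · have h2 : ¬ Even n := Nat.not_even_iff_odd.mpr h
    have h1 : Even (n+1) := by simpa [Nat.even_add_one] using h2
    simp only [if_pos h1, if_neg h2]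
    rw [Nat.factorial_succ]
    push_cast
    rw [div_mul_eq_mul_div, div_eq_div_iff (by positivity) (by positivity)]
    ring

lemma deriv_sh : (d⁄dX ℚ) sh = ch := by
  ext n
  rw [PowerSeries.coeff_derivative]
  simp only [ch, sh, PowerSeries.coeff_mk]
  rcases Nat.even_or_odd n with h | h
  · have h1 : ¬ Even (n+1) := by simpa [Nat.even_add_one] using h
    simp only [if_neg h1, if_pos h]
    rw [Nat.factorial_succ]
    push_cast
    rw [div_mul_eq_mul_div, div_eq_div_iff (by positivity) (by positivity)]
    ring
  · have h2 : ¬ Even n := Nat.not_even_iff_odd.mpr h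
    have h1 : Even (n+1) := by simpa [Nat.even_add_one] using h2
    simp [h1, h2]

lemma deriv_fE : (d⁄dX ℚ) fE = -(sh * (fE * fE)) := by
  have h0 : (d⁄dX ℚ) (ch * fE) = 0 := by rw [ch_mul_fE]; exact Derivation.map_one_eq_zero _
  rw [Derivation.leibniz] at h0
  have h1 : ch • (d⁄dX ℚ) fE + fE • sh = 0 := by rw [← deriv_ch]; exact h0
  have h2 : fE * (ch • (d⁄dX ℚ) fE + fE • sh) = 0 := by rw [h1, mul_zero]
  simp only [smul_eq_mul, mul_add] at h2
  have h3 : fE * (ch * (d⁄dX ℚ) fE) = (ch * fE) * (d⁄dX ℚ) fE := by ring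
  rw [h3, ch_mul_fE, one_mul] at h2
  linear_combination h2

lemma key_sh : sh * sh * (fE * fE) = 1 - fE * fE := by
  linear_combination (-(fE*fE)) * ch_sq + (ch*fE+1) * ch_mul_fE

lemma d_fE_pow (k : ℕ) : (d⁄dX ℚ) (fE^(k+1)) = -((k+1 : ℕ) • (sh * fE^(k+2))) := by
  have h := Derivation.leibniz_pow (d⁄dX ℚ) fE (n := k+1)
  rw [deriv_fE] at h
  have e : k + 1 - 1 = k := rfl
  rw [e] at h
  rw [h]
  simp only [nsmul_eq_mul, smul_eq_mul]
  push_cast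
  ring

lemma d2_fE_pow (j : ℕ) : (d⁄dX ℚ) ((d⁄dX ℚ) (fE^(2*j+1)))
    = ((2*j+1:ℕ)^2 : ℚ⟦X⟧) * fE^(2*j+1) - (((2*j+1:ℕ)*(2*j+2:ℕ)) : ℚ⟦X⟧) * fE^(2*j+3) := by
  have e1 := d_fE_pow (2*j)
  have e2 := d_fE_pow (2*j+1)
  rw [e1]
  rw [map_neg, Derivation.map_smul_of_tower, Derivation.leibniz, deriv_sh]
  rw [show 2*j+2 = (2*j+1)+1 from rfl, e2]
  simp only [nsmul_eq_mul, smul_eq_mul]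
  push_cast
  have hkey : sh * sh * (fE * fE) = 1 - fE * fE := key_sh
  have hc : ch * fE = 1 := ch_mul_fE
  linear_combination ((2*(j:ℚ⟦X⟧)+1)*(2*(j:ℚ⟦X⟧)+2) * fE^(2*j+1)) * hkey
    - ((2*(j:ℚ⟦X⟧)+1) * fE^(2*j+1)) * hc

noncomputable def Psi (p : Polynomial ℤ) : ℚ⟦X⟧ :=
  p.sum fun j a => (a:ℚ) • fE^(2*j+1)

lemma Psi_monomial (j : ℕ) (a : ℤ) :
    Psi (Polynomial.C a * Polynomial.X ^ j) = (a:ℚ) • fE^(2*j+1) := by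
  rw [Polynomial.C_mul_X_pow_eq_monomial, Psi, Polynomial.sum_monomial_index]
  simp

lemma Psi_add (p q : Polynomial ℤ) : Psi (p + q) = Psi p + Psi q := by
  unfold Psi
  rw [Polynomial.sum_add_index] <;> intros <;> push_cast <;> simp [add_smul]

lemma Psi_sub (p q : Polynomial ℤ) : Psi (p - q) = Psi p - Psi q := by
  have h := Psi_add (p - q) q
  rw [sub_add_cancel] at h
  rw [h]; ring

lemma dd_Psi (p : Polynomial ℤ) :
    (d⁄dX ℚ) ((d⁄dX ℚ) (Psi p)) = Psi (Lop p) := by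
  induction p using Polynomial.induction_on' with
  | add p q hp hq => rw [Psi_add, map_add, map_add, hp, hq, Lop_add, Psi_add]
  | monomial j a =>
    rw [← Polynomial.C_mul_X_pow_eq_monomial, Psi_monomial, Lop_monomial]
    have e : Polynomial.C a * (Polynomial.C ((2*(j:ℤ)+1)^2) * Polynomial.X ^ j
        - Polynomial.C ((2*(j:ℤ)+1)*(2*(j:ℤ)+2)) * Polynomial.X ^ (j+1))
        = Polynomial.C (a * ((2*(j:ℤ)+1)^2)) * Polynomial.X ^ j
          - Polynomial.C (a * ((2*(j:ℤ)+1)*(2*(j:ℤ)+2))) * Polynomial.X ^ (j+1) := by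
      simp only [Polynomial.C_mul]; ring
    rw [e, Psi_sub, Psi_monomial, Psi_monomial, Derivation.map_smul, Derivation.map_smul,
      d2_fE_pow]
    have e2 : 2*(j+1)+1 = 2*j+3 := by omega
    rw [e2]
    simp only [PowerSeries.smul_eq_C_mul, smul_sub]
    push_cast
    simp only [map_mul, map_add, map_pow, map_one, map_ofNat, map_natCast,
      PowerSeries.smul_eq_C_mul]
    ring

lemma iter_bridge (n : ℕ) : (⇑(d⁄dX ℚ))^[2*n] fE = Psi (Lop^[n] 1) := by
  induction n with
  | zero =>
    have h := Psi_monomial 0 1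
    norm_num at h
    simpa using h.symm
  | succ n ih =>
    have e : 2*(n+1) = 2 + 2*n := by omega
    rw [e, Function.iterate_add_apply, ih]
    have e2 : (⇑(d⁄dX ℚ))^[2] (Psi (Lop^[n] 1))
        = (d⁄dX ℚ) ((d⁄dX ℚ) (Psi (Lop^[n] 1))) := by
      rw [show (2:ℕ) = 1 + 1 from rfl, Function.iterate_add_apply]
      simp
    rw [e2, dd_Psi, Function.iterate_succ_apply']

lemma coeff_zero_iter (k : ℕ) : ∀ g : ℚ⟦X⟧, PowerSeries.coeff 0 ((⇑(d⁄dX ℚ))^[k] g)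
    = (k.factorial : ℚ) * PowerSeries.coeff k g := by
  induction k with
  | zero => intro g; simp
  | succ k ih =>
    intro g
    rw [Function.iterate_succ_apply, ih, PowerSeries.coeff_derivative, Nat.factorial_succ]
    push_cast
    ring

lemma coeff_zero_Psi (p : Polynomial ℤ) :
    PowerSeries.coeff 0 (Psi p) = ((p.eval 1 : ℤ) : ℚ) := by
  rw [Psi, Polynomial.sum_def, map_sum, Polynomial.eval_eq_sum, Polynomial.sum_def]
  push_cast
  apply Finset.sum_congr rfl
  intro j _
  rw [map_smul, PowerSeries.coeff_zero_eq_constantCoeff, map_pow, constantCoeff_fE]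
  simp

lemma eulerE_eval (n : ℕ) : eulerE (2*n) = (Lop^[n] 1).eval 1 := by
  have h1 := coeff_zero_iter (2*n) fE
  rw [iter_bridge, coeff_zero_Psi] at h1
  have h2 : PowerSeries.coeff (2*n) fE = (eulerE (2*n) : ℚ) / ((2*n).factorial : ℚ) := by
    rw [fE, PowerSeries.coeff_mk]
  rw [h2] at h1
  have hf : ((2*n).factorial : ℚ) ≠ 0 := by positivity
  rw [mul_div_cancel₀ _ hf] at h1
  exact_mod_cast h1.symm

theorem stern_congruence_m_ge_two (b k m : ℕ) (hb : Even b) (hk : 0 < k) (hm : 2 ≤ m) :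
    eulerE (2 ^ m * k + b) ≡ eulerE b + 2 ^ m * k [ZMOD 2 ^ (m + 2)] := by
  obtain ⟨n, rfl⟩ : ∃ n, b = 2*n := by obtain ⟨t, ht⟩ := hb; exact ⟨t, by omega⟩
  obtain ⟨s, rfl⟩ : ∃ s, m = s + 2 := ⟨m - 2, by omega⟩
  have hidx : 2^(s+2) * k + 2*n = 2*(n + 2^(s+1) * k) := by
    have h2 : (2:ℕ)^(s+2) = 2 * 2^(s+1) := by ring
    rw [h2]; ring
  rw [hidx, eulerE_eval, eulerE_eval]
  obtain ⟨q, hq⟩ := partB s k n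
  have hd : ((2:ℤ)^(s+2+2)) ∣ ((Lop^[n] 1).eval 1 + 2^(s+2) * (k:ℤ))
      - (Lop^[n + 2^(s+1) * k] 1).eval 1 := ⟨-q, by linear_combination -hq⟩
  exact (Int.modEq_iff_dvd).mpr hd
end
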